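/- arXiv:1702.00067 — 6 statements merged into one kernel-verified Lean document; each statement's English description precedes it below -/
import Mathlib

section
/- Let μ be a probability measure on ℝ admitting an exponential moment, i.e. there exists λ ∈ ℝ \ {0} with ∫ e^{λx} dμ(x) < ∞. Then the characteristic function φ of μ cannot vanish identically on any nonempty open interval of ℝ. -/
open MeasureTheory Set

section Aux
open Complex Filter intervalIntegral Topology


lemma norm_integrand (s : ℝ) (z : ℂ) (x : ℝ) :
    ‖Complex.exp (z * x * Complex.I + s * x)‖ = Real.exp ((s - z.im) * x) := by
  rw [Complex.norm_exp]
  congr 1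
  simp [Complex.add_re, Complex.mul_re, Complex.I_re, Complex.I_im]
  ring

lemma exp_le_aux {lam c : ℝ} (h1 : 0 ≤ c) (h2 : c ≤ lam) (x : ℝ) :
    Real.exp (c * x) ≤ 1 + Real.exp (lam * x) := by
  rcases le_or_gt 0 x with hx | hx
  · have : c * x ≤ lam * x := mul_le_mul_of_nonneg_right h2 hx
    calc Real.exp (c * x) ≤ Real.exp (lam * x) := Real.exp_le_exp.2 this
      _ ≤ 1 + Real.exp (lam * x) := by linarith
  · have : c * x ≤ 0 := mul_nonpos_of_nonneg_of_nonpos h1 hx.le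
    calc Real.exp (c * x) ≤ 1 := Real.exp_le_one_iff.2 this
      _ ≤ 1 + Real.exp (lam * x) := by have := Real.exp_pos (lam * x); linarith

variable {μ : Measure ℝ} [IsFiniteMeasure μ] {lam : ℝ}

lemma integrable_one_add (hint : Integrable (fun x => Real.exp (lam * x)) μ) :
    Integrable (fun x => 1 + Real.exp (lam * x)) μ := (integrable_const 1).add hint

lemma integrable_G (hint : Integrable (fun x => Real.exp (lam * x)) μ) {s : ℝ} {z : ℂ}
    (h1 : 0 ≤ s - z.im) (h2 : s - z.im ≤ lam) :
    Integrable (fun x : ℝ => Complex.exp (z * x * Complex.I + s * x)) μ := by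
  refine (integrable_one_add hint).mono (Continuous.aestronglyMeasurable (by fun_prop))
    (ae_of_all _ fun x => ?_)
  rw [norm_integrand, Real.norm_of_nonneg (by positivity)]
  exact exp_le_aux h1 h2 x

lemma claim1 {c : ℝ} (hc : c < lam) {x : ℝ} (hx : 0 ≤ x) :
    x * Real.exp (c * x) ≤ 1 / (lam - c) * Real.exp (lam * x) := by
  have hlc : 0 < lam - c := by linarith
  have h1 : (lam - c) * x ≤ Real.exp ((lam - c) * x) := by
    have := Real.add_one_le_exp ((lam - c) * x); linarith
  have h2 : ((lam - c) * x) * Real.exp (c * x) ≤ Real.exp ((lam - c) * x) * Real.exp (c * x) :=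
    mul_le_mul_of_nonneg_right h1 (Real.exp_pos _).le
  rw [← Real.exp_add] at h2
  have h3 : (lam - c) * x + c * x = lam * x := by ring
  rw [h3] at h2
  rw [div_mul_eq_mul_div, le_div_iff₀ hlc]
  nlinarith [h2]

lemma claim2 {c : ℝ} (hc : 0 < c) {x : ℝ} (hx : x < 0) :
    |x| * Real.exp (c * x) ≤ 1 / c := by
  have h1 : c * (-x) ≤ Real.exp (c * (-x)) := by
    have := Real.add_one_le_exp (c * (-x)); linarith
  have h2 : Real.exp (c * (-x)) = (Real.exp (c * x))⁻¹ := by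
    rw [← Real.exp_neg]; ring_nf
  rw [abs_of_neg hx]
  rw [h2] at h1
  have h3 : 0 < Real.exp (c * x) := Real.exp_pos _
  rw [le_div_iff₀ hc]
  calc -x * Real.exp (c * x) * c = (c * (-x)) * Real.exp (c * x) := by ring
    _ ≤ (Real.exp (c * x))⁻¹ * Real.exp (c * x) := mul_le_mul_of_nonneg_right h1 h3.le
    _ = 1 := inv_mul_cancel₀ h3.ne'

lemma integrable_abs_exp (hint : Integrable (fun x => Real.exp (lam * x)) μ)
    {c : ℝ} (h1 : 0 < c) (h2 : c < lam) :
    Integrable (fun x => |x| * Real.exp (c * x)) μ := by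
  have hb : Integrable (fun x => 1 / c + 1 / (lam - c) * Real.exp (lam * x)) μ :=
    (integrable_const _).add (hint.const_mul _)
  refine hb.mono (Continuous.aestronglyMeasurable (by fun_prop)) (ae_of_all _ fun x => ?_)
  have hlc : 0 < lam - c := by linarith
  have key : |x| * Real.exp (c * x) ≤ 1 / c + 1 / (lam - c) * Real.exp (lam * x) := by
    rcases le_or_gt 0 x with hx | hx
    · have := claim1 h2 hx
      rw [_root_.abs_of_nonneg hx]
      have : 0 ≤ 1 / c := by positivity
      nlinarith [claim1 h2 hx]
    · have := claim2 h1 hx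
      have hp : 0 < Real.exp (lam * x) := Real.exp_pos _
      have h4 : 0 ≤ 1 / (lam - c) * Real.exp (lam * x) := by positivity
      linarith
  rw [Real.norm_of_nonneg (by positivity), Real.norm_of_nonneg (by positivity)]
  exact key

lemma hasDerivAt_G (hint : Integrable (fun x => Real.exp (lam * x)) μ)
    {s : ℝ} {z₀ : ℂ} (h1 : 0 < s - z₀.im) (h2 : s - z₀.im < lam) :

    HasDerivAt (fun z => ∫ x, Complex.exp (z * x * Complex.I + s * x) ∂μ)
      (∫ x, (x * Complex.I) * Complex.exp (z₀ * x * Complex.I + s * x) ∂μ) z₀ := by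
  have nint : ∀ {s' : ℝ} {z : ℂ}, 0 ≤ s' - z.im → s' - z.im ≤ lam →
      Integrable (fun x : ℝ => Complex.exp (z * x * Complex.I + s' * x)) μ :=
    fun h1 h2 => integrable_G hint h1 h2
  have aint : ∀ {c : ℝ}, 0 < c → c < lam → Integrable (fun x => |x| * Real.exp (c * x)) μ :=
    fun h1 h2 => integrable_abs_exp hint h1 h2
  have nrm := norm_integrand

  set c₀ := s - z₀.im with hc₀
  set ε := min c₀ (lam - c₀) / 2 with hε
  have hεpos : 0 < ε := by
    apply div_pos _ two_pos
    exact lt_min h1 (by linarith)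
  have hε1 : ε < c₀ := by
    have h : min c₀ (lam - c₀) ≤ c₀ := min_le_left _ _
    have : ε ≤ c₀ / 2 := by rw [hε]; linarith
    linarith
  have hε2 : c₀ + ε < lam := by
    have h : min c₀ (lam - c₀) ≤ lam - c₀ := min_le_right _ _
    have : ε ≤ (lam - c₀) / 2 := by rw [hε]; linarith
    linarith
  set c₁ := c₀ - ε with hc₁
  set c₂ := c₀ + ε with hc₂
  have hc₁pos : 0 < c₁ := by simp [hc₁]; linarith
  have hc₂lam : c₂ < lam := hε2
  -- the derivative lemma
  have main := _root_.hasDerivAt_integral_of_dominated_loc_of_lip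
    (F := fun (z : ℂ) (x : ℝ) => Complex.exp (z * x * Complex.I + s * x))
    (F' := fun (x : ℝ) => (x * Complex.I) * Complex.exp (z₀ * x * Complex.I + s * x))
    (x₀ := z₀) (s := Metric.ball z₀ ε)
    (bound := fun x => |x| * (Real.exp (c₁ * x) + Real.exp (c₂ * x)))
    (Metric.ball_mem_nhds z₀ hεpos)
    (Eventually.of_forall fun z => Continuous.aestronglyMeasurable (by fun_prop))
    (nint h1.le h2.le)
    (Continuous.aestronglyMeasurable (by fun_prop))
    ?_ ?_ ?_
  · exact main.2
  · -- Lipschitz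
    refine ae_of_all _ fun x => ?_
    have hconv : Convex ℝ (Metric.ball z₀ ε) := convex_ball _ _
    refine hconv.lipschitzOnWith_of_nnnorm_hasDerivWithin_le (f' := fun z =>
        (x * Complex.I) * Complex.exp (z * x * Complex.I + s * x)) ?_ ?_
    · intro z hz
      have hd : HasDerivAt (fun z : ℂ => z * x * Complex.I + s * x) ((x : ℂ) * Complex.I) z := by
        simpa using (((hasDerivAt_id z).mul_const (x : ℂ)).mul_const Complex.I).add_const
          ((s : ℂ) * x)
      have := hd.cexp
      refine (HasDerivAt.hasDerivWithinAt ?_)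
      convert this using 1
      · rfl
      ring
    · intro z hz
      rw [← NNReal.coe_le_coe, coe_nnnorm, Real.coe_nnabs]
      have him : |z.im - z₀.im| < ε := by
        have := Complex.abs_im_le_norm (z - z₀)
        have h3 : ‖z - z₀‖ < ε := by
          simpa [Complex.dist_eq] using Metric.mem_ball.1 hz
        simp only [Complex.sub_im] at this
        linarith [this.trans_lt h3]
      have hcz : c₁ ≤ s - z.im ∧ s - z.im ≤ c₂ := by
        rw [abs_lt] at him
        constructor <;> [skip; skip] <;> simp [hc₁, hc₂, hc₀] at * <;> linarith
      rw [norm_mul, nrm]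
      have hxn : ‖(x : ℂ) * Complex.I‖ = |x| := by
        simp
      rw [hxn]
      have hexp : Real.exp ((s - z.im) * x) ≤ Real.exp (c₁ * x) + Real.exp (c₂ * x) := by
        rcases le_or_gt 0 x with hx | hx
        · have : (s - z.im) * x ≤ c₂ * x := mul_le_mul_of_nonneg_right hcz.2 hx
          have := Real.exp_le_exp.2 this
          have := (Real.exp_pos (c₁ * x)).le
          linarith
        · have : (s - z.im) * x ≤ c₁ * x := by nlinarith [hcz.1]
          have := Real.exp_le_exp.2 this
          have := (Real.exp_pos (c₂ * x)).le
          linarith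
      have habs : |(|x| * (Real.exp (c₁ * x) + Real.exp (c₂ * x)))| =
          |x| * (Real.exp (c₁ * x) + Real.exp (c₂ * x)) := by
        apply _root_.abs_of_nonneg; positivity
      rw [habs]
      exact mul_le_mul_of_nonneg_left hexp (abs_nonneg x)
  · -- bound integrable
    have i1 := aint hc₁pos (by linarith)
    have i2 := aint (by linarith : (0:ℝ) < c₂) hc₂lam
    simpa [mul_add, Pi.add_def] using i1.add i2
  · -- pointwise derivative
    refine ae_of_all _ fun x => ?_
    have hd : HasDerivAt (fun z : ℂ => z * x * Complex.I + s * x) ((x : ℂ) * Complex.I) z₀ := by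
      simpa using (((hasDerivAt_id z₀).mul_const (x : ℂ)).mul_const Complex.I).add_const
        ((s : ℂ) * x)
    have := hd.cexp
    convert this using 1
    · rfl
    ring


variable {μ : Measure ℝ} [IsFiniteMeasure μ] {lam : ℝ}

lemma convex_reProdIm' {s t : Set ℝ} (hs : Convex ℝ s) (ht : Convex ℝ t) :
    Convex ℝ (s ×ℂ t) := by
  have h := Complex.convexHull_reProdIm s t
  rw [hs.convexHull_eq, ht.convexHull_eq] at h
  rw [← h]
  exact convex_convexHull ℝ _

lemma integrable_exp_real (hint : Integrable (fun x => Real.exp (lam * x)) μ) {c : ℝ}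
    (h1 : 0 ≤ c) (h2 : c ≤ lam)
    (hexp : ∀ x, Real.exp (c * x) ≤ 1 + Real.exp (lam * x)) :
    Integrable (fun x : ℝ => Real.exp (c * x)) μ := by
  refine ((integrable_const 1).add hint).mono
    (Continuous.aestronglyMeasurable (by fun_prop)) (ae_of_all _ fun x => ?_)
  calc ‖Real.exp (c * x)‖ = Real.exp (c * x) := Real.norm_of_nonneg (Real.exp_pos _).le
    _ ≤ 1 + Real.exp (lam * x) := hexp x
    _ ≤ ‖1 + Real.exp (lam * x)‖ := Real.le_norm_self _

lemma contOn_G (hint : Integrable (fun x => Real.exp (lam * x)) μ) {s : ℝ}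
    (nrm : ∀ (s : ℝ) (z : ℂ) (x : ℝ),
      ‖Complex.exp (z * x * Complex.I + s * x)‖ = Real.exp ((s - z.im) * x))
    (hexp : ∀ c : ℝ, 0 ≤ c → c ≤ lam → ∀ x, Real.exp (c * x) ≤ 1 + Real.exp (lam * x)) :
    ContinuousOn (fun z : ℂ => ∫ x, Complex.exp (z * x * Complex.I + s * x) ∂μ)
      {z : ℂ | s - lam ≤ z.im ∧ z.im ≤ s} := by
  apply continuousOn_of_dominated (bound := fun x => 1 + Real.exp (lam * x))
  · exact fun z _ => Continuous.aestronglyMeasurable (by fun_prop)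
  · intro z hz
    refine ae_of_all _ fun x => ?_
    rw [nrm]
    exact hexp _ (by linarith [hz.2]) (by linarith [hz.1]) x
  · exact (integrable_const 1).add hint
  · exact ae_of_all _ fun x => Continuous.continuousOn (by fun_prop)


lemma abs_sub_of_uIoc {a b t : ℝ} (h : t ∈ Set.uIoc a b) : |t - a| ≤ |b - a| := by
  rcases Set.mem_uIoc.1 h with ⟨h1, h2⟩ | ⟨h1, h2⟩ <;>
    rw [abs_le] <;> constructor <;> cases' abs_cases (b - a) with h4 h4 <;> linarith [h4.1, h4.2]

lemma moreraRect {α β y₁ y₂ : ℝ} (F : ℂ → ℂ)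
    (hαβ : α < β) (hy : y₁ < y₂)
    (hc : ContinuousOn F (Ioo α β ×ℂ Ioo y₁ y₂))
    (hrect : ∀ x₁ x₂ t₁ t₂, x₁ ∈ Ioo α β → x₂ ∈ Ioo α β → t₁ ∈ Ioo y₁ y₂ → t₂ ∈ Ioo y₁ y₂ →
      (∫ x in x₁..x₂, F (x + t₁*Complex.I)) - (∫ x in x₁..x₂, F (x + t₂*Complex.I)) +
      Complex.I • (∫ y in t₁..t₂, F (x₂ + y*Complex.I)) -
      Complex.I • (∫ y in t₁..t₂, F (x₁ + y*Complex.I)) = 0) :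
    ∀ z ∈ (Ioo α β ×ℂ Ioo y₁ y₂), AnalyticAt ℂ F z := by
  set U : Set ℂ := Ioo α β ×ℂ Ioo y₁ y₂ with hU
  have hUopen : IsOpen U := isOpen_Ioo.reProdIm isOpen_Ioo
  set x₀ : ℝ := (α + β)/2 with hx₀
  set s₀ : ℝ := (y₁ + y₂)/2 with hs₀
  have hx₀m : x₀ ∈ Ioo α β := by constructor <;> simp [hx₀] <;> linarith
  have hs₀m : s₀ ∈ Ioo y₁ y₂ := by constructor <;> simp [hs₀] <;> linarith
  -- integrability of F along horizontal/vertical segments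
  have hhor : ∀ (t : ℝ), t ∈ Ioo y₁ y₂ → ∀ u v : ℝ, u ∈ Ioo α β → v ∈ Ioo α β →
      IntervalIntegrable (fun x : ℝ => F (x + t*Complex.I)) volume u v := by
    intro t ht u v hu hv
    apply ContinuousOn.intervalIntegrable
    apply hc.comp (by fun_prop : Continuous fun x : ℝ => (x:ℂ) + t*Complex.I).continuousOn
    intro x hx
    have : Set.uIcc u v ⊆ Ioo α β := by
      exact (Set.ordConnected_Ioo).uIcc_subset hu hv
    exact Complex.mem_reProdIm.2 ⟨by simpa using this hx, by simpa using ht⟩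
  have hver : ∀ (u : ℝ), u ∈ Ioo α β → ∀ t₁ t₂ : ℝ, t₁ ∈ Ioo y₁ y₂ → t₂ ∈ Ioo y₁ y₂ →
      IntervalIntegrable (fun t : ℝ => F (u + t*Complex.I)) volume t₁ t₂ := by
    intro u hu t₁ t₂ h1 h2
    apply ContinuousOn.intervalIntegrable
    apply hc.comp (by fun_prop : Continuous fun t : ℝ => (u:ℂ) + t*Complex.I).continuousOn
    intro t ht
    have : Set.uIcc t₁ t₂ ⊆ Ioo y₁ y₂ := (Set.ordConnected_Ioo).uIcc_subset h1 h2
    exact Complex.mem_reProdIm.2 ⟨by simpa using hu, by simpa using this ht⟩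
  -- the primitive
  set P : ℂ → ℂ := fun z =>
    (∫ t in x₀..z.re, F (t + s₀*Complex.I)) + Complex.I * ∫ t in s₀..z.im, F (z.re + t*Complex.I)
    with hP_def
  have hP : ∀ z ∈ U, HasDerivAt P (F z) z := by
    intro z hz
    obtain ⟨hzre, hzim⟩ := Complex.mem_reProdIm.1 hz
    rw [hasDerivAt_iff_isLittleO, Asymptotics.isLittleO_iff]
    intro c hcpos
    have hFc : ContinuousAt F z := hc.continuousAt (hUopen.mem_nhds hz)
    obtain ⟨δ, hδpos, hδ⟩ := Metric.continuousAt_iff.1 hFc (c/2) (by linarith)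
    obtain ⟨δ', hδ'pos, hδ'⟩ := Metric.isOpen_iff.1 hUopen z hz
    have hηpos : 0 < min δ' (δ/2) := lt_min hδ'pos (by linarith)
    filter_upwards [Metric.ball_mem_nhds z hηpos] with w hw
    have hwU : w ∈ U := hδ' (Metric.ball_subset_ball (min_le_left _ _) hw)
    obtain ⟨hwre, hwim⟩ := Complex.mem_reProdIm.1 hwU
    have hdist : dist w z < min δ' (δ/2) := Metric.mem_ball.1 hw
    -- representation of P w - P z
    have hstep1 : (∫ t in x₀..w.re, F (t + s₀*Complex.I)) - ∫ t in x₀..z.re, F (t + s₀*Complex.I)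
        = ∫ t in z.re..w.re, F (t + s₀*Complex.I) :=
      integral_interval_sub_left (hhor s₀ hs₀m x₀ w.re hx₀m hwre) (hhor s₀ hs₀m x₀ z.re hx₀m hzre)
    have hstep2 : (∫ t in s₀..w.im, F (z.re + t*Complex.I))
          - ∫ t in s₀..z.im, F (z.re + t*Complex.I)
        = ∫ t in z.im..w.im, F (z.re + t*Complex.I) :=
      integral_interval_sub_left (hver z.re hzre s₀ w.im hs₀m hwim)
        (hver z.re hzre s₀ z.im hs₀m hzim)
    have hre := hrect z.re w.re s₀ w.im hzre hwre hs₀m hwim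
    have hrep : P w - P z = (∫ t in z.re..w.re, F (t + w.im*Complex.I))
        + Complex.I * ∫ t in z.im..w.im, F (z.re + t*Complex.I) := by
      have : P w - P z = ((∫ t in x₀..w.re, F (t + s₀*Complex.I))
            - ∫ t in x₀..z.re, F (t + s₀*Complex.I))
          + Complex.I * (∫ t in s₀..w.im, F (w.re + t*Complex.I))
          - Complex.I * (∫ t in s₀..z.im, F (z.re + t*Complex.I)) := by
        simp only [hP_def]; ring
      rw [this, hstep1]
      have h4 : (∫ t in z.re..w.re, F (t + s₀*Complex.I))
            + Complex.I * (∫ t in s₀..w.im, F (w.re + t*Complex.I))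
          = (∫ t in z.re..w.re, F (t + w.im*Complex.I))
            + Complex.I * (∫ t in s₀..w.im, F (z.re + t*Complex.I)) := by
        have := hre
        simp only [smul_eq_mul] at this
        linear_combination this
      linear_combination h4 + Complex.I * hstep2
    -- subtract the linear part
    have hwz : w - z = ((w.re - z.re : ℝ) : ℂ) + ((w.im - z.im : ℝ) : ℂ) * Complex.I := by
      simp [Complex.ext_iff]
    have hconst1 : (w - z) • F z = ((w.re - z.re : ℝ) : ℂ) * F z
        + Complex.I * (((w.im - z.im : ℝ) : ℂ) * F z) := by
      rw [smul_eq_mul, hwz]; ring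
    have hint1 : IntervalIntegrable (fun t : ℝ => F (t + w.im*Complex.I)) volume z.re w.re :=
      hhor w.im hwim z.re w.re hzre hwre
    have hint2 : IntervalIntegrable (fun t : ℝ => F (z.re + t*Complex.I)) volume z.im w.im :=
      hver z.re hzre z.im w.im hzim hwim
    have hsub1 : (∫ t in z.re..w.re, F (t + w.im*Complex.I)) - ((w.re - z.re : ℝ) : ℂ) * F z
        = ∫ t in z.re..w.re, (F (t + w.im*Complex.I) - F z) := by
      rw [intervalIntegral.integral_sub hint1 (intervalIntegrable_const)]
      simp [sub_eq_iff_eq_add]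
    have hsub2 : (∫ t in z.im..w.im, F (z.re + t*Complex.I)) - ((w.im - z.im : ℝ) : ℂ) * F z
        = ∫ t in z.im..w.im, (F (z.re + t*Complex.I) - F z) := by
      rw [intervalIntegral.integral_sub hint2 (intervalIntegrable_const)]
      simp [sub_eq_iff_eq_add]
    have hmain : P w - P z - (w - z) • F z
        = (∫ t in z.re..w.re, (F (t + w.im*Complex.I) - F z))
          + Complex.I * ∫ t in z.im..w.im, (F (z.re + t*Complex.I) - F z) := by
      rw [hrep, hconst1, ← hsub1, ← hsub2]; ring
    -- estimates
    have hb1 : ‖∫ t in z.re..w.re, (F (t + w.im*Complex.I) - F z)‖ ≤ c/2 * |w.re - z.re| := by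
      apply intervalIntegral.norm_integral_le_of_norm_le_const
      intro t ht
      have h5 : dist (t + w.im*Complex.I : ℂ) z < δ := by
        rw [Complex.dist_eq]
        have h6 : ((t:ℂ) + w.im*Complex.I) - z = ((t - z.re : ℝ) : ℂ)
            + ((w.im - z.im : ℝ) : ℂ) * Complex.I := by
          simp [Complex.ext_iff]
        rw [h6]
        calc ‖((t - z.re : ℝ) : ℂ) + ((w.im - z.im : ℝ) : ℂ) * Complex.I‖
            ≤ ‖((t - z.re : ℝ) : ℂ)‖
              + ‖((w.im - z.im : ℝ) : ℂ) * Complex.I‖ := norm_add_le _ _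
          _ = |t - z.re| + |w.im - z.im| := by
              simp [map_mul, Complex.norm_I, ← Complex.ofReal_sub, Complex.norm_real]
          _ ≤ |w.re - z.re| + |w.im - z.im| := by
              have := abs_sub_of_uIoc ht
              linarith
          _ ≤ dist w z + dist w z := by
              have h7 : |w.re - z.re| ≤ dist w z := by
                rw [Complex.dist_eq]
                simpa using Complex.abs_re_le_norm (w - z)
              have h8 : |w.im - z.im| ≤ dist w z := by
                rw [Complex.dist_eq]
                simpa using Complex.abs_im_le_norm (w - z)
              linarith
          _ < δ := by
              have := hdist.trans_le (min_le_right _ _)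
              linarith
      have := hδ h5
      rw [dist_eq_norm] at this
      exact this.le
    have hb2 : ‖∫ t in z.im..w.im, (F (z.re + t*Complex.I) - F z)‖ ≤ c/2 * |w.im - z.im| := by
      apply intervalIntegral.norm_integral_le_of_norm_le_const
      intro t ht
      have h5 : dist ((z.re:ℂ) + t*Complex.I) z < δ := by
        rw [Complex.dist_eq]
        have h6 : ((z.re:ℂ) + t*Complex.I) - z = ((t - z.im : ℝ) : ℂ) * Complex.I := by
          simp [Complex.ext_iff]
        rw [h6]
        have h9 : ‖((t - z.im : ℝ) : ℂ) * Complex.I‖ = |t - z.im| := by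
          simp [map_mul, Complex.norm_I, ← Complex.ofReal_sub, Complex.norm_real]
        rw [h9]
        have h10 : |t - z.im| ≤ |w.im - z.im| := abs_sub_of_uIoc ht
        have h8 : |w.im - z.im| ≤ dist w z := by
          rw [Complex.dist_eq]
          simpa using Complex.abs_im_le_norm (w - z)
        have := hdist.trans_le (min_le_right _ _)
        linarith
      have := hδ h5
      rw [dist_eq_norm] at this
      exact this.le
    rw [hmain]
    have h7 : |w.re - z.re| ≤ ‖w - z‖ := by
      simpa using Complex.abs_re_le_norm (w - z)
    have h8 : |w.im - z.im| ≤ ‖w - z‖ := by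
      simpa using Complex.abs_im_le_norm (w - z)
    calc ‖(∫ t in z.re..w.re, (F (t + w.im*Complex.I) - F z))
          + Complex.I * ∫ t in z.im..w.im, (F (z.re + t*Complex.I) - F z)‖
        ≤ ‖∫ t in z.re..w.re, (F (t + w.im*Complex.I) - F z)‖
          + ‖Complex.I * ∫ t in z.im..w.im, (F (z.re + t*Complex.I) - F z)‖ := norm_add_le _ _
      _ ≤ c/2 * |w.re - z.re| + c/2 * |w.im - z.im| := by
          rw [norm_mul, Complex.norm_I, one_mul]
          linarith
      _ ≤ c * ‖w - z‖ := by nlinarith [norm_nonneg (w - z), abs_nonneg (w.re - z.re)]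
  -- conclude analyticity
  have hPd : DifferentiableOn ℂ P U := fun z hz =>
    (hP z hz).differentiableAt.differentiableWithinAt
  have hPa : AnalyticOnNhd ℂ P U := hPd.analyticOnNhd hUopen
  have hda : AnalyticOnNhd ℂ (deriv P) U := hPa.deriv
  intro z hz
  refine (hda z hz).congr ?_
  filter_upwards [hUopen.mem_nhds hz] with w hw
  exact (hP w hw).deriv
lemma key (μ : Measure ℝ) [IsProbabilityMeasure μ] (lam : ℝ) (hlam : 0 < lam)
    (hint : Integrable (fun x => Real.exp (lam * x)) μ)
    (a b : ℝ) (hab : a < b) :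
    ∃ t ∈ Ioo a b, (∫ x, Complex.exp (t * x * Complex.I) ∂μ) ≠ 0 := by
  by_contra hcon
  push_neg at hcon
  set s : ℝ := lam / 2 with hs_def
  have hs : 0 < s := by rw [hs_def]; linarith
  have hlam2 : lam = 2 * s := by rw [hs_def]; ring
  set g : ℂ → ℂ := fun z => ∫ x, Complex.exp (z * x * Complex.I + s * x) ∂μ with hg_def
  have hexp_eq : ∀ (t x : ℝ), ((t:ℂ) + s * Complex.I) * x * Complex.I + s * x
      = (t:ℂ) * x * Complex.I := by
    intro t x
    calc ((t:ℂ) + s * Complex.I) * x * Complex.I + s * x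
        = (t:ℂ) * x * Complex.I + ((s:ℂ) * x) * (Complex.I * Complex.I) + s * x := by ring
      _ = (t:ℂ) * x * Complex.I := by rw [Complex.I_mul_I]; ring
  have hgb : ∀ t : ℝ, t ∈ Ioo a b → g ((t:ℂ) + s * Complex.I) = 0 := by
    intro t ht
    have h1 : g ((t:ℂ) + s * Complex.I) = ∫ x, Complex.exp ((t:ℂ) * x * Complex.I) ∂μ := by
      simp only [hg_def]
      congr 1
      funext x
      rw [hexp_eq]
    rw [h1]
    exact hcon t ht
  have hgb' : ∀ z : ℂ, z.im = s → z.re ∈ Ioo a b → g z = 0 := by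
    intro z hzi hzr
    have h1 := hgb z.re hzr
    rw [← hzi] at h1
    rwa [Complex.re_add_im z] at h1
  have hgd : ∀ z : ℂ, -s < z.im → z.im < s → DifferentiableAt ℂ g z := by
    intro z h1 h2
    rw [hg_def]
    exact (hasDerivAt_G hint (by linarith) (by rw [hlam2]; linarith)).differentiableAt
  have hgc : ContinuousOn g {z : ℂ | s - lam ≤ z.im ∧ z.im ≤ s} := by
    rw [hg_def]
    exact contOn_G hint norm_integrand (fun c h1 h2 x => exp_le_aux h1 h2 x)
  have hDs : ∀ z : ℂ, -s ≤ z.im → z.im ≤ s → z ∈ {z : ℂ | s - lam ≤ z.im ∧ z.im ≤ s} := by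
    intro z h1 h2
    exact ⟨by rw [hlam2]; linarith, h2⟩
  set F : ℂ → ℂ := fun z => if z.im ≤ s then g z else 0 with hF_def
  set U : Set ℂ := Ioo a b ×ℂ Ioo 0 (2*s) with hU_def
  have hsmem : s ∈ Ioo 0 (2*s) := ⟨hs, by linarith⟩
  have hUopen : IsOpen U := isOpen_Ioo.reProdIm isOpen_Ioo
  have hFval : ∀ z : ℂ, z.im ≤ s → F z = g z := fun z hz => if_pos hz
  have hFval' : ∀ z : ℂ, s < z.im → F z = 0 := fun z hz => if_neg (not_le.2 hz)
  have hFupper : ∀ z : ℂ, s ≤ z.im → z.re ∈ Ioo a b → F z = 0 := by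
    intro z hz hzre
    rcases eq_or_lt_of_le hz with heq | hlt
    · rw [hFval z heq.symm.le, hgb' z heq.symm hzre]
    · exact hFval' z hlt
  have hFc : ContinuousOn F U := by
    intro z hz
    obtain ⟨hzre, hzim⟩ := Complex.mem_reProdIm.1 hz
    rcases lt_trichotomy z.im s with hlt | heq | hgt
    · have hga : ContinuousAt g z := (hgd z (by linarith [hzim.1]) hlt).continuousAt
      have heqF : g =ᶠ[𝓝 z] F := by
        have hopen : IsOpen {w : ℂ | w.im < s} := isOpen_lt Complex.continuous_im continuous_const
        filter_upwards [hopen.mem_nhds hlt] with w hw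
        exact (hFval w hw.le).symm
      exact (hga.congr heqF).continuousWithinAt
    · have hgz : g z = 0 := hgb' z heq hzre
      have hFz : F z = 0 := by rw [hFval z heq.le, hgz]
      unfold ContinuousWithinAt
      rw [hFz]
      have h1 : Tendsto F (𝓝[U ∩ {w : ℂ | w.im ≤ s}] z) (𝓝 0) := by
        have hsub : U ∩ {w : ℂ | w.im ≤ s} ⊆ {z : ℂ | s - lam ≤ z.im ∧ z.im ≤ s} := by
          intro w hw
          obtain ⟨hwU, hwle⟩ := hw
          obtain ⟨hwre, hwim⟩ := Complex.mem_reProdIm.1 hwU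
          exact hDs w (by linarith [hwim.1]) hwle
        have hgt' : Tendsto g (𝓝[U ∩ {w : ℂ | w.im ≤ s}] z) (𝓝 0) := by
          have h2 := (hgc z (hDs z (by linarith) heq.le)).mono hsub
          rw [ContinuousWithinAt, hgz] at h2
          exact h2
        refine hgt'.congr' ?_
        filter_upwards [self_mem_nhdsWithin] with w hw
        exact (hFval w hw.2).symm
      have h2 : Tendsto F (𝓝[U ∩ {w : ℂ | s < w.im}] z) (𝓝 0) := by
        refine tendsto_const_nhds.congr' ?_
        filter_upwards [self_mem_nhdsWithin] with w hw
        exact (hFval' w hw.2).symm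
      have hle : 𝓝[U] z ≤ 𝓝[U ∩ {w : ℂ | w.im ≤ s}] z ⊔ 𝓝[U ∩ {w : ℂ | s < w.im}] z := by
        rw [← nhdsWithin_union]
        apply nhdsWithin_mono
        intro w hw
        rcases le_or_gt w.im s with h | h
        · exact Or.inl ⟨hw, h⟩
        · exact Or.inr ⟨hw, h⟩
      exact (tendsto_sup.2 ⟨h1, h2⟩).mono_left hle
    · have hopen : IsOpen {w : ℂ | s < w.im} := isOpen_lt continuous_const Complex.continuous_im
      have heqF : (fun _ : ℂ => (0:ℂ)) =ᶠ[𝓝 z] F := by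
        filter_upwards [hopen.mem_nhds hgt] with w hw
        exact (hFval' w hw).symm
      exact (continuousAt_const.congr heqF).continuousWithinAt
  have hFver : ∀ u : ℝ, u ∈ Ioo a b → ∀ t₁ t₂ : ℝ, t₁ ∈ Ioo 0 (2*s) → t₂ ∈ Ioo 0 (2*s) →
      IntervalIntegrable (fun t : ℝ => F ((u:ℂ) + t * Complex.I)) volume t₁ t₂ := by
    intro u hu t₁ t₂ h1 h2
    apply ContinuousOn.intervalIntegrable
    apply hFc.comp (by fun_prop : Continuous fun t : ℝ => (u:ℂ) + t * Complex.I).continuousOn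
    intro t ht
    have hsub : Set.uIcc t₁ t₂ ⊆ Ioo 0 (2*s) := (Set.ordConnected_Ioo).uIcc_subset h1 h2
    exact Complex.mem_reProdIm.2 ⟨by simpa using hu, by simpa using hsub ht⟩
  have lowerRect : ∀ x₁ x₂ u v : ℝ, x₁ ∈ Ioo a b → x₂ ∈ Ioo a b → u ∈ Ioo 0 (2*s) →
      v ∈ Ioo 0 (2*s) → u ≤ s → v ≤ s →
      (∫ x in x₁..x₂, F (x + u*Complex.I)) - (∫ x in x₁..x₂, F (x + v*Complex.I)) +
      Complex.I • (∫ y in u..v, F (x₂ + y*Complex.I)) -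
      Complex.I • (∫ y in u..v, F (x₁ + y*Complex.I)) = 0 := by
    intro x₁ x₂ u v hx₁ hx₂ hu hv hus hvs
    have Hc : ContinuousOn g (Set.uIcc x₁ x₂ ×ℂ Set.uIcc u v) := by
      apply hgc.mono
      intro w hw
      obtain ⟨hwre, hwim⟩ := Complex.mem_reProdIm.1 hw
      rw [Set.mem_uIcc] at hwim
      refine hDs w ?_ ?_ <;> rcases hwim with h | h <;>
        [skip; skip; skip; skip] <;> cases' h with h1 h2 <;> linarith [hu.1, hv.1]
    have Hd : DifferentiableOn ℂ g
        (Ioo (min x₁ x₂) (max x₁ x₂) ×ℂ Ioo (min u v) (max u v)) := by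
      intro w hw
      obtain ⟨hwre, hwim⟩ := Complex.mem_reProdIm.1 hw
      have h1 : 0 < min u v := lt_min hu.1 hv.1
      have h2 : max u v ≤ s := max_le hus hvs
      exact (hgd w (by linarith [hwim.1]) (by linarith [hwim.2])).differentiableWithinAt
    have hre1 : ((x₁:ℂ) + u*Complex.I).re = x₁ := by simp
    have him1 : ((x₁:ℂ) + u*Complex.I).im = u := by simp
    have hre2 : ((x₂:ℂ) + v*Complex.I).re = x₂ := by simp
    have him2 : ((x₂:ℂ) + v*Complex.I).im = v := by simp
    have H := Complex.integral_boundary_rect_eq_zero_of_continuousOn_of_differentiableOn g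
      ((x₁:ℂ) + u*Complex.I) ((x₂:ℂ) + v*Complex.I)
      (by rw [hre1, him1, hre2, him2]; exact Hc)
      (by rw [hre1, him1, hre2, him2]; exact Hd)
    rw [hre1, him1, hre2, him2] at H
    have e1 : (∫ x in x₁..x₂, F (x + u*Complex.I)) = ∫ x in x₁..x₂, g (x + u*Complex.I) :=
      intervalIntegral.integral_congr (fun x _ => hFval _ (by simpa using hus))
    have e2 : (∫ x in x₁..x₂, F (x + v*Complex.I)) = ∫ x in x₁..x₂, g (x + v*Complex.I) :=
      intervalIntegral.integral_congr (fun x _ => hFval _ (by simpa using hvs))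
    have e3 : (∫ y in u..v, F (x₂ + y*Complex.I)) = ∫ y in u..v, g (x₂ + y*Complex.I) := by
      refine intervalIntegral.integral_congr (fun y hy => hFval _ ?_)
      rw [Set.mem_uIcc] at hy
      simp only [Complex.add_im, Complex.ofReal_im, Complex.mul_im, Complex.I_im, Complex.I_re,
        Complex.ofReal_re, zero_add]
      rcases hy with h | h <;> cases' h with hA hB <;> simp <;> linarith
    have e4 : (∫ y in u..v, F (x₁ + y*Complex.I)) = ∫ y in u..v, g (x₁ + y*Complex.I) := by
      refine intervalIntegral.integral_congr (fun y hy => hFval _ ?_)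
      rw [Set.mem_uIcc] at hy
      rcases hy with h | h <;> cases' h with hA hB <;> simp <;> linarith
    rw [e1, e2, e3, e4]
    exact H
  have upperRect : ∀ x₁ x₂ u v : ℝ, x₁ ∈ Ioo a b → x₂ ∈ Ioo a b → u ∈ Ioo 0 (2*s) →
      v ∈ Ioo 0 (2*s) → s ≤ u → s ≤ v →
      (∫ x in x₁..x₂, F (x + u*Complex.I)) - (∫ x in x₁..x₂, F (x + v*Complex.I)) +
      Complex.I • (∫ y in u..v, F (x₂ + y*Complex.I)) -
      Complex.I • (∫ y in u..v, F (x₁ + y*Complex.I)) = 0 := by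
    intro x₁ x₂ u v hx₁ hx₂ hu hv hsu hsv
    have hx₁₂ : Set.uIcc x₁ x₂ ⊆ Ioo a b := (Set.ordConnected_Ioo).uIcc_subset hx₁ hx₂
    have e1 : ∀ t : ℝ, s ≤ t → (∫ x in x₁..x₂, F (x + t*Complex.I)) = 0 := by
      intro t ht
      have heq : EqOn (fun x : ℝ => F (x + t*Complex.I)) (fun _ => (0:ℂ)) (Set.uIcc x₁ x₂) := by
        intro x hx
        exact hFupper _ (by simpa using ht) (by simpa using hx₁₂ hx)
      rw [intervalIntegral.integral_congr heq, intervalIntegral.integral_zero]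
    have e2 : ∀ x₀ : ℝ, x₀ ∈ Ioo a b → (∫ y in u..v, F (x₀ + y*Complex.I)) = 0 := by
      intro x₀ hx₀
      have heq : EqOn (fun y : ℝ => F (x₀ + y*Complex.I)) (fun _ => (0:ℂ)) (Set.uIcc u v) := by
        intro y hy
        rw [Set.mem_uIcc] at hy
        refine hFupper _ ?_ (by simpa using hx₀)
        simp only [Complex.add_im, Complex.ofReal_im, Complex.mul_im, Complex.I_im, Complex.I_re,
          Complex.ofReal_re, zero_add]
        rcases hy with h | h <;> cases' h with hA hB <;> simp <;> linarith
      rw [intervalIntegral.integral_congr heq, intervalIntegral.integral_zero]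
    rw [e1 u hsu, e1 v hsv, e2 x₂ hx₂, e2 x₁ hx₁]
    simp
  have hrect : ∀ x₁ x₂ t₁ t₂ : ℝ, x₁ ∈ Ioo a b → x₂ ∈ Ioo a b → t₁ ∈ Ioo 0 (2*s) →
      t₂ ∈ Ioo 0 (2*s) →
      (∫ x in x₁..x₂, F (x + t₁*Complex.I)) - (∫ x in x₁..x₂, F (x + t₂*Complex.I)) +
      Complex.I • (∫ y in t₁..t₂, F (x₂ + y*Complex.I)) -
      Complex.I • (∫ y in t₁..t₂, F (x₁ + y*Complex.I)) = 0 := by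
    intro x₁ x₂ t₁ t₂ hx₁ hx₂ ht₁ ht₂
    rcases le_total t₁ s with h1 | h1 <;> rcases le_total t₂ s with h2 | h2
    · exact lowerRect x₁ x₂ t₁ t₂ hx₁ hx₂ ht₁ ht₂ h1 h2
    · have R1 := lowerRect x₁ x₂ t₁ s hx₁ hx₂ ht₁ hsmem h1 le_rfl
      have R2 := upperRect x₁ x₂ s t₂ hx₁ hx₂ hsmem ht₂ le_rfl h2
      have v1 := intervalIntegral.integral_add_adjacent_intervals
        (hFver x₂ hx₂ t₁ s ht₁ hsmem) (hFver x₂ hx₂ s t₂ hsmem ht₂)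
      have v2 := intervalIntegral.integral_add_adjacent_intervals
        (hFver x₁ hx₁ t₁ s ht₁ hsmem) (hFver x₁ hx₁ s t₂ hsmem ht₂)
      simp only [smul_eq_mul] at R1 R2 ⊢
      linear_combination R1 + R2 - Complex.I * v1 + Complex.I * v2
    · have R1 := upperRect x₁ x₂ t₁ s hx₁ hx₂ ht₁ hsmem h1 le_rfl
      have R2 := lowerRect x₁ x₂ s t₂ hx₁ hx₂ hsmem ht₂ le_rfl h2
      have v1 := intervalIntegral.integral_add_adjacent_intervals
        (hFver x₂ hx₂ t₁ s ht₁ hsmem) (hFver x₂ hx₂ s t₂ hsmem ht₂)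
      have v2 := intervalIntegral.integral_add_adjacent_intervals
        (hFver x₁ hx₁ t₁ s ht₁ hsmem) (hFver x₁ hx₁ s t₂ hsmem ht₂)
      simp only [smul_eq_mul] at R1 R2 ⊢
      linear_combination R1 + R2 - Complex.I * v1 + Complex.I * v2
    · exact upperRect x₁ x₂ t₁ t₂ hx₁ hx₂ ht₁ ht₂ h1 h2
  have hFan : AnalyticOnNhd ℂ F U := fun z hz =>
    moreraRect F hab (by linarith : (0:ℝ) < 2*s) hFc hrect z hz
  have hUconv : Convex ℝ U := convex_reProdIm' (convex_Ioo a b) (convex_Ioo 0 (2*s))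
  have hc₀ : (a+b)/2 ∈ Ioo a b := ⟨by linarith, by linarith⟩
  set w₀ : ℂ := (((a+b)/2 : ℝ) : ℂ) + ((3*s/2 : ℝ) : ℂ) * Complex.I with hw₀_def
  have hw₀im : w₀.im = 3*s/2 := by simp [hw₀_def]
  have hw₀ : w₀ ∈ U := by
    refine Complex.mem_reProdIm.2 ⟨by simpa [hw₀_def] using hc₀, ?_⟩
    rw [hw₀im]
    constructor <;> linarith
  have hF0 : F =ᶠ[𝓝 w₀] 0 := by
    have hopen : IsOpen {w : ℂ | s < w.im} := isOpen_lt continuous_const Complex.continuous_im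
    filter_upwards [hopen.mem_nhds (by rw [Set.mem_setOf_eq, hw₀im]; linarith)] with w hw
    exact hFval' w hw
  have hFeq0 : EqOn F 0 U :=
    hFan.eqOn_zero_of_preconnected_of_eventuallyEq_zero hUconv.isPreconnected hw₀ hF0
  set O : Set ℂ := univ ×ℂ Ioo (-s) s with hO_def
  have hOopen : IsOpen O := isOpen_univ.reProdIm isOpen_Ioo
  have hOconv : Convex ℝ O := convex_reProdIm' convex_univ (convex_Ioo _ _)
  have hgan : AnalyticOnNhd ℂ g O := by
    apply DifferentiableOn.analyticOnNhd _ hOopen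
    intro z hz
    obtain ⟨_, hzim⟩ := Complex.mem_reProdIm.1 hz
    exact (hgd z hzim.1 hzim.2).differentiableWithinAt
  set w₁ : ℂ := (((a+b)/2 : ℝ) : ℂ) + ((s/2 : ℝ) : ℂ) * Complex.I with hw₁_def
  have hw₁im : w₁.im = s/2 := by simp [hw₁_def]
  have hw₁O : w₁ ∈ O := by
    refine Complex.mem_reProdIm.2 ⟨mem_univ _, ?_⟩
    rw [hw₁im]
    constructor <;> linarith
  have hg0 : g =ᶠ[𝓝 w₁] 0 := by
    have hV : IsOpen (U ∩ {w : ℂ | w.im < s}) :=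
      hUopen.inter (isOpen_lt Complex.continuous_im continuous_const)
    have hw₁V : w₁ ∈ U ∩ {w : ℂ | w.im < s} := by
      refine ⟨Complex.mem_reProdIm.2 ⟨by simpa [hw₁_def] using hc₀, ?_⟩, ?_⟩
      · rw [hw₁im]; constructor <;> linarith
      · rw [Set.mem_setOf_eq, hw₁im]; linarith
    filter_upwards [hV.mem_nhds hw₁V] with w hw
    have h3 := hFeq0 hw.1
    rw [← hFval w hw.2.le]
    exact h3
  have hgeq0 : EqOn g 0 O :=
    hgan.eqOn_zero_of_preconnected_of_eventuallyEq_zero hOconv.isPreconnected hw₁O hg0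
  have h00 : g 0 = 0 := hgeq0 (Complex.mem_reProdIm.2 ⟨mem_univ _, by simp [hs]⟩)
  have hg0val : g 0 = ((∫ x, Real.exp (s * x) ∂μ : ℝ) : ℂ) := by
    simp only [hg_def]
    have hx : ∀ x : ℝ, Complex.exp ((0:ℂ) * x * Complex.I + s * x)
        = ((Real.exp (s * x) : ℝ) : ℂ) := by
      intro x
      rw [show ((0:ℂ) * x * Complex.I + s * x) = ((s * x : ℝ) : ℂ) by push_cast; ring,
        Complex.ofReal_exp]
    simp only [hx]
    exact _root_.integral_ofReal
  have hi : Integrable (fun x : ℝ => Real.exp (s * x)) μ :=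
    integrable_exp_real hint hs.le (by linarith) (fun x => exp_le_aux hs.le (by linarith) x)
  have hpos : (∫ x, Real.exp (s * x) ∂μ) ≠ 0 := by
    intro h0
    have hz := (integral_eq_zero_iff_of_nonneg (fun x => (Real.exp_pos _).le) hi).1 h0
    haveI : (ae μ).NeBot := IsProbabilityMeasure.ae_neBot (μ := μ)
    obtain ⟨x, hx⟩ := hz.exists
    exact (Real.exp_pos (s * x)).ne' hx
  rw [hg0val] at h00
  exact hpos (by exact_mod_cast h00)

end Aux

theorem stmt2
    (μ : Measure ℝ) [IsProbabilityMeasure μ]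
    (φ : ℝ → ℂ) (hφ : ∀ t, φ t = ∫ x, Complex.exp (t * x * Complex.I) ∂μ)
    (lam : ℝ) (hlam : lam ≠ 0)
    (hint : Integrable (fun x => Real.exp (lam * x)) μ)
    (a b : ℝ) (hab : a < b) :
    ∃ t ∈ Ioo a b, φ t ≠ 0 := by
  rcases hlam.lt_or_gt with hneg | hpos
  · set ν : Measure ℝ := μ.map (fun x : ℝ => -x) with hν
    have hmeas : Measurable (fun x : ℝ => -x) := measurable_neg
    haveI : IsProbabilityMeasure ν := Measure.isProbabilityMeasure_map hmeas.aemeasurable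
    have hemb : MeasurableEmbedding (fun x : ℝ => -x) :=
      (Homeomorph.neg ℝ).measurableEmbedding
    have hint' : Integrable (fun x => Real.exp ((-lam) * x)) ν := by
      rw [hν, hemb.integrable_map_iff]
      have hcomp : ((fun x => Real.exp ((-lam) * x)) ∘ (fun x : ℝ => -x))
          = fun x => Real.exp (lam * x) := by
        funext x
        simp only [Function.comp]
        rw [show -lam * -x = lam * x by ring]
      rw [hcomp]
      exact hint
    obtain ⟨t, ht, hne⟩ := key ν (-lam) (by linarith) hint' (-b) (-a) (by linarith)
    refine ⟨-t, ⟨by linarith [ht.2], by linarith [ht.1]⟩, ?_⟩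
    rw [hφ]
    intro h0
    apply hne
    rw [hν, integral_map hmeas.aemeasurable (Continuous.aestronglyMeasurable (by fun_prop))]
    rw [show (fun x : ℝ => Complex.exp ((t:ℂ) * (-x : ℝ) * Complex.I))
        = fun x : ℝ => Complex.exp (((-t : ℝ):ℂ) * x * Complex.I) from
      funext fun x => by push_cast; ring_nf]
    exact h0
  · obtain ⟨t, ht, hne⟩ := key μ lam hpos hint a b hab
    exact ⟨t, ht, by rw [hφ]; exact hne⟩
end

section
/- Let k : ℝ → ℂ be measurable such that the absolute moments M_n = ∫_ℝ |u|^n |k(u)| du are finite for all n ≥ 0 and satisfy limsup_n M_n/n! < ∞. Let φ : ℝ → ℂ be bounded and continuous, and define Ψ(t) = ∫_ℝ e^{iut} φ(u) k(u) du. Then Ψ is real-analytic on ℝ. -/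
open MeasureTheory Filter
open scoped NNReal ENNReal

lemma aux_sum (M : ℕ → ℝ) (hM : ∀ n, 0 ≤ M n) (C : ℝ)
    (hC : ∀ᶠ n : ℕ in atTop, M n / n.factorial ≤ C) (B r : ℝ) (hr0 : 0 ≤ r) (hr : r < 1) :
    Summable (fun n : ℕ => B * (M n / n.factorial) * r ^ n) := by
  apply summable_of_isBigO_nat (summable_geometric_of_lt_one hr0 hr)
  rw [Asymptotics.isBigO_iff]
  refine ⟨|B| * max C 0, ?_⟩
  filter_upwards [hC] with n hn
  have h1 : 0 ≤ M n / n.factorial := div_nonneg (hM n) (by positivity)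
  have h2 : M n / n.factorial ≤ max C 0 := le_trans hn (le_max_left _ _)
  rw [Real.norm_eq_abs, Real.norm_eq_abs, abs_mul, abs_mul, abs_of_nonneg h1, abs_pow,
    abs_of_nonneg hr0]
  gcongr

theorem stmt10
    (k : ℝ → ℂ) (hkmeas : Measurable k)
    (hM : ∀ n : ℕ, Integrable (fun u => |u| ^ n * ‖k u‖))
    (hlim : ∃ C : ℝ, ∀ᶠ n : ℕ in atTop,
      (∫ u, |u| ^ n * ‖k u‖) / (n.factorial : ℝ) ≤ C)
    (φ : ℝ → ℂ) (hφcont : Continuous φ) (hφbd : ∃ B : ℝ, ∀ u, ‖φ u‖ ≤ B)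
    (Ψ : ℝ → ℂ) (hΨ : ∀ t, Ψ t = ∫ u : ℝ, Complex.exp (u * t * Complex.I) * φ u * k u) :
    ∀ x : ℝ, AnalyticAt ℝ Ψ x := by
  obtain ⟨C, hC⟩ := hlim
  obtain ⟨B, hB⟩ := hφbd
  have hB0 : 0 ≤ B := le_trans (norm_nonneg _) (hB 0)
  set M : ℕ → ℝ := fun n => ∫ u, |u| ^ n * ‖k u‖ with hMdef
  have hMnn : ∀ n, 0 ≤ M n := fun n =>
    integral_nonneg fun u => by positivity
  intro x
  -- the "base" integrand
  set g : ℝ → ℂ := fun u => Complex.exp (u * x * Complex.I) * φ u * k u with hgdef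
  have hgmeas : AEStronglyMeasurable g volume := by
    apply AEStronglyMeasurable.mul
    apply AEStronglyMeasurable.mul
    · exact ((Complex.continuous_exp.comp (by fun_prop)).aestronglyMeasurable)
    · exact hφcont.aestronglyMeasurable
    · exact hkmeas.aestronglyMeasurable
  have hgnorm : ∀ u : ℝ, ‖g u‖ ≤ B * ‖k u‖ := by
    intro u
    have : ‖g u‖ = ‖Complex.exp (u * x * Complex.I)‖ * ‖φ u‖
        * ‖k u‖ := by simp [hgdef, map_mul]
    rw [this]
    have hexp : ‖Complex.exp (u * x * Complex.I)‖ = 1 := by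
      rw [Complex.norm_exp]
      simp
    rw [hexp, one_mul]
    exact mul_le_mul_of_nonneg_right (hB u) (norm_nonneg _)
  -- moments integrands
  set h : ℕ → ℝ → ℂ := fun n u => (u : ℂ) ^ n * g u with hhdef
  have hhnorm : ∀ n u, ‖h n u‖ ≤ B * (|u| ^ n * ‖k u‖) := by
    intro n u
    have : ‖h n u‖ = |u| ^ n * ‖g u‖ := by
      simp [hhdef, norm_mul, norm_pow]
    rw [this]
    calc |u| ^ n * ‖g u‖ ≤ |u| ^ n * (B * ‖k u‖) :=
          mul_le_mul_of_nonneg_left (hgnorm u) (by positivity)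
      _ = B * (|u| ^ n * ‖k u‖) := by ring
  have hhmeas : ∀ n, AEStronglyMeasurable (h n) volume := by
    intro n
    exact ((Complex.continuous_ofReal.pow n).aestronglyMeasurable.mul hgmeas)
  have hhint : ∀ n, Integrable (h n) := by
    intro n
    refine Integrable.mono' ((hM n).const_mul B) (hhmeas n) ?_
    exact Filter.Eventually.of_forall (hhnorm n)
  have hhintnorm : ∀ n, ∫ u, ‖h n u‖ ≤ B * M n := by
    intro n
    calc ∫ u, ‖h n u‖ ≤ ∫ u, B * (|u| ^ n * ‖k u‖) :=
          integral_mono (hhint n).norm ((hM n).const_mul B) (hhnorm n)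
      _ = B * M n := by rw [hMdef]; exact integral_const_mul B _
  -- the coefficients and the power series
  set c : ℕ → ℂ := fun n => (Complex.I ^ n / n.factorial) * ∫ u, h n u with hcdef
  have hcnorm : ∀ n, ‖c n‖ ≤ B * (M n / n.factorial) := by
    intro n
    have h1 : ‖c n‖ ≤ (1 / n.factorial) * ∫ u, ‖h n u‖ := by
      rw [hcdef]
      simp only [norm_mul, norm_div]
      have : ‖(Complex.I : ℂ) ^ n‖ = 1 := by simp
      rw [this]
      have hnf : ‖((n.factorial : ℂ))‖ = (n.factorial : ℝ) := by
        simp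
      rw [hnf]
      gcongr
      exact norm_integral_le_integral_norm _
    refine h1.trans ?_
    calc 1 / (n.factorial:ℝ) * ∫ u, ‖h n u‖ ≤ 1 / (n.factorial:ℝ) * (B * M n) :=
          mul_le_mul_of_nonneg_left (hhintnorm n) (by positivity)
      _ = B * (M n / n.factorial) := by ring
  set p : FormalMultilinearSeries ℝ ℝ ℂ :=
    fun n => ContinuousMultilinearMap.mkPiRing ℝ (Fin n) (c n) with hpdef
  have hpapply : ∀ n (y : ℝ), (p n fun _ => y) = y ^ n • c n := by
    intro n y
    simp [hpdef, ContinuousMultilinearMap.mkPiRing_apply]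
  have hpnorm : ∀ n, ‖p n‖ = ‖c n‖ := fun n => ContinuousMultilinearMap.norm_mkPiRing (𝕜 := ℝ) (ι := Fin n) (c n)
  -- radius bound
  have hrad : (((1:ℝ≥0)/2 : ℝ≥0) : ℝ≥0∞) ≤ p.radius := by
    apply p.le_radius_of_summable_norm
    have hc2 : ((((1:ℝ≥0)/2 : ℝ≥0)) : ℝ) = (1/2 : ℝ) := by norm_num
    simp only [hc2, hpnorm]
    refine Summable.of_nonneg_of_le (fun n => by positivity) (fun n => ?_)
      (aux_sum M hMnn C hC B (1/2) (by norm_num) (by norm_num))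
    exact mul_le_mul_of_nonneg_right (hcnorm n) (by positivity)
  -- the series converges to Ψ on the ball
  apply HasFPowerSeriesOnBall.analyticAt (r := ((1:ℝ≥0)/2 : ℝ≥0))
  refine ⟨hrad, by norm_num, ?_⟩
  intro y hy
  rw [mem_emetric_ball_zero_iff] at hy
  have hy' : |y| < 1/2 := by
    have h2 := ENNReal.coe_lt_coe.mp hy
    have h3 : ((‖y‖₊ : ℝ≥0) : ℝ) < (((1:ℝ≥0)/2 : ℝ≥0) : ℝ) := by exact_mod_cast h2
    rw [coe_nnnorm, Real.norm_eq_abs] at h3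
    calc |y| < (((1:ℝ≥0)/2 : ℝ≥0) : ℝ) := h3
      _ = 1/2 := by norm_num
  set F : ℕ → ℝ → ℂ := fun n u => ((u : ℂ) * y * Complex.I) ^ n / n.factorial * g u with hFdef
  have hFeq : ∀ n, F n = fun u => ((y : ℂ) * Complex.I) ^ n / n.factorial * h n u := by
    intro n
    funext u
    simp only [hFdef, hhdef]
    ring
  have hFint : ∀ n, Integrable (F n) := by
    intro n
    rw [hFeq n]
    exact (hhint n).const_mul _
  have hFintnorm : ∀ n, ∫ u, ‖F n u‖ ≤ B * (M n / n.factorial) * |y| ^ n := by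
    intro n
    have hb : ∀ u, ‖F n u‖ ≤ (|y| ^ n / n.factorial) * (B * (|u| ^ n * ‖k u‖)) := by
      intro u
      rw [hFeq n]
      calc ‖((y:ℂ) * Complex.I) ^ n / (n.factorial : ℂ) * h n u‖
          = ‖((y:ℂ) * Complex.I) ^ n / (n.factorial : ℂ)‖ * ‖h n u‖ := norm_mul _ _
        _ = |y| ^ n / n.factorial * ‖h n u‖ := by
            rw [norm_div, norm_pow, norm_mul]
            simp
        _ ≤ (|y| ^ n / n.factorial) * (B * (|u| ^ n * ‖k u‖)) :=
            mul_le_mul_of_nonneg_left (hhnorm n u) (by positivity)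
    calc ∫ u, ‖F n u‖ ≤ ∫ u, (|y| ^ n / n.factorial) * (B * (|u| ^ n * ‖k u‖)) :=
          integral_mono (hFint n).norm (((hM n).const_mul B).const_mul _) hb
      _ = (|y| ^ n / n.factorial) * (B * M n) := by
          rw [integral_const_mul, integral_const_mul]
      _ = B * (M n / n.factorial) * |y| ^ n := by ring
  have hFsum : Summable (fun n => ∫ u, ‖F n u‖) := by
    refine Summable.of_nonneg_of_le
      (fun n => integral_nonneg fun u => norm_nonneg _) hFintnorm ?_
    exact aux_sum M hMnn C hC B |y| (abs_nonneg y) (hy'.trans (by norm_num))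
  have key := hasSum_integral_of_summable_integral_norm (μ := volume) hFint hFsum
  -- identify the sum of the series pointwise
  have hptsum : ∀ u : ℝ,
      (∑' n, F n u) = Complex.exp ((u:ℂ) * ((x:ℂ) + (y:ℂ)) * Complex.I) * φ u * k u := by
    intro u
    have hs : HasSum (fun n : ℕ => ((u : ℂ) * y * Complex.I) ^ n / n.factorial)
        (Complex.exp ((u : ℂ) * y * Complex.I)) := by
      rw [Complex.exp_eq_exp_ℂ]
      exact NormedSpace.expSeries_div_hasSum_exp _
    have h2 : (∑' n, F n u) = Complex.exp ((u : ℂ) * y * Complex.I) * g u :=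
      (hs.mul_right (g u)).tsum_eq
    rw [h2]
    have h3 : g u = Complex.exp ((u:ℂ) * (x:ℂ) * Complex.I) * φ u * k u := rfl
    rw [h3, show Complex.exp ((u:ℂ) * y * Complex.I)
          * (Complex.exp ((u:ℂ) * (x:ℂ) * Complex.I) * φ u * k u)
        = Complex.exp ((u:ℂ) * y * Complex.I) * Complex.exp ((u:ℂ) * (x:ℂ) * Complex.I)
          * (φ u * k u) by ring,
      ← Complex.exp_add,
      show (u:ℂ) * y * Complex.I + (u:ℂ) * (x:ℂ) * Complex.I
        = (u:ℂ) * ((x:ℂ) + (y:ℂ)) * Complex.I by ring]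
    ring
  -- identify each integral with the series term
  have hterm : ∀ n, (∫ u, F n u) = (p n fun _ => y) := by
    intro n
    rw [hpapply n y, hFeq n, integral_const_mul, Complex.real_smul]
    simp only [hcdef]
    push_cast
    rw [mul_pow]
    ring
  have hΨval : (∫ u, (∑' n, F n u)) = Ψ (x + y) := by
    rw [hΨ (x + y)]
    congr 1
    funext u
    rw [hptsum u]
    push_cast
    ring_nf
  rw [← funext hterm]  -- ?
  rw [← hΨval]
  exact key
end

section
/- Let k : ℝ → ℂ be measurable such that M_n = ∫_ℝ |u|^n |k(u)| du < ∞ for all n ≥ 0 with limsup_n M_n/n! < ∞, and suppose k does not vanish almost everywhere on any nonempty open interval of ℝ. Define f(t) = ∫_ℝ e^{iut} k(u) du for t ≥ 0 and assume f is a probability density when restricted appropriately. Then for any g ∈ L¹([0,∞)): if ∫_0^∞ f(t+s) g(s) ds = 0 for all t ≥ 0, then g = 0 almost everywhere. -/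
open MeasureTheory Filter Set
open scoped FourierTransform SchwartzMap

namespace Stmt11Aux

lemma norm_exp_mul_I (a b : ℝ) : ‖Complex.exp (a * b * Complex.I)‖ = 1 := by
  rw [show ((a : ℂ) * b * Complex.I) = ((a * b : ℝ) : ℂ) * Complex.I by push_cast; ring,
    Complex.norm_exp_ofReal_mul_I]

lemma fourier_inj (h : ℝ → ℂ) (hint : Integrable h)
    (hz : ∀ t : ℝ, ∫ u : ℝ, Complex.exp (u * t * Complex.I) * h u = 0) :
    ∀ᵐ u : ℝ, h u = 0 := by
  -- first, the Fourier transform of h vanishes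
  have hFz : ∀ ξ : ℝ, 𝓕 h ξ = 0 := by
    intro ξ
    rw [Real.fourier_real_eq]
    rw [← hz (-(2 * Real.pi * ξ))]
    refine integral_congr_ae (Filter.Eventually.of_forall fun v => ?_)
    simp only [Circle.smul_def, Real.fourierChar_apply]
    congr 1
    push_cast
    ring
  refine ae_eq_zero_of_integral_contDiff_smul_eq_zero hint.locallyIntegrable
    (fun g g_diff g_supp => ?_)
  -- make `g` into a Schwartz function with values in ℂ
  have q_diff : ContDiff ℝ (⊤ : ℕ∞) (fun x : ℝ => (g x : ℂ)) :=
    Complex.ofRealCLM.contDiff.comp g_diff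
  have q_supp : HasCompactSupport (fun x : ℝ => (g x : ℂ)) :=
    g_supp.comp_left (g := fun r : ℝ => (r : ℂ)) (by simp)
  let G : 𝓢(ℝ, ℂ) :=
    { toFun := fun x => (g x : ℂ)
      smooth' := q_diff
      decay' := by
        intro k n
        have hD : HasCompactSupport (iteratedFDeriv ℝ n (fun x : ℝ => (g x : ℂ))) :=
          q_supp.iteratedFDeriv n
        have hcont : Continuous
            (fun x : ℝ => ‖x‖ ^ k * ‖iteratedFDeriv ℝ n (fun x : ℝ => (g x : ℂ)) x‖) :=
          (continuous_norm.pow k).mul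
            (q_diff.continuous_iteratedFDeriv (mod_cast le_top)).norm
        have hsupp2 : HasCompactSupport
            (fun x : ℝ => ‖x‖ ^ k * ‖iteratedFDeriv ℝ n (fun x : ℝ => (g x : ℂ)) x‖) :=
          HasCompactSupport.mul_left hD.norm
        obtain ⟨C, hC⟩ := hcont.bounded_above_of_compact_support hsupp2
        exact ⟨C, fun x => (Real.le_norm_self _).trans (hC x)⟩ }
  set w : 𝓢(ℝ, ℂ) := (FourierTransform.fourierCLE ℝ 𝓢(ℝ, ℂ)).symm G with hw
  have hFw : 𝓕 (⇑w) = ⇑G := by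
    have h1 := (FourierTransform.fourierCLE ℝ 𝓢(ℝ, ℂ)).apply_symm_apply G
    rw [← SchwartzMap.fourier_coe, ← FourierTransform.fourierCLE_apply (R := ℝ) w, h1]
  have h1 : ∀ ξ : ℝ, VectorFourier.fourierIntegral Real.fourierChar volume (innerₗ ℝ) ⇑w ξ
      = G ξ := by
    intro ξ
    rw [← hFw]
    rfl
  have h2 : ∀ x : ℝ, VectorFourier.fourierIntegral Real.fourierChar volume (innerₗ ℝ).flip h x
      = 0 := by
    intro x
    rw [← hFz x]
    rw [flip_innerₗ]
    rfl
  have mulform := VectorFourier.integral_fourierIntegral_smul_eq_flip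
    (L := innerₗ ℝ) (μ := (volume : Measure ℝ)) (ν := (volume : Measure ℝ)) Real.continuous_fourierChar continuous_inner w.integrable hint
  calc ∫ x : ℝ, g x • h x
      = ∫ ξ : ℝ, (VectorFourier.fourierIntegral Real.fourierChar volume (innerₗ ℝ) ⇑w ξ) • h ξ := by
        refine integral_congr_ae (Filter.Eventually.of_forall fun x => ?_)
        simp only [h1 x]
        show g x • h x = (↑(g x) : ℂ) • h x
        rw [Complex.real_smul, smul_eq_mul]
    _ = ∫ x : ℝ, w x • (VectorFourier.fourierIntegral Real.fourierChar volume
          (innerₗ ℝ).flip h x) := mulform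
    _ = 0 := by
        refine integral_eq_zero_of_ae (Filter.Eventually.of_forall fun x => ?_)
        have h3 : VectorFourier.fourierIntegral Real.fourierChar volume (innerₗ ℝ) h x = 0 :=
          hFz x
        simp [h3]

lemma analytic_aux (h : ℝ → ℂ) (hm : AEStronglyMeasurable h volume)
    (hint : ∀ n : ℕ, Integrable (fun u : ℝ => |u| ^ n * ‖h u‖))
    (B : ℝ) (hB : ∀ n : ℕ, (∫ u : ℝ, |u| ^ n * ‖h u‖) ≤ B * n.factorial) :
    AnalyticOnNhd ℝ (fun t : ℝ => ∫ u : ℝ, Complex.exp (u * t * Complex.I) * h u) Set.univ := by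
  intro t₀ _
  set c : ℕ → ℂ := fun n =>
    (∫ u : ℝ, ((u : ℂ) * Complex.I) ^ n * Complex.exp (u * t₀ * Complex.I) * h u) / n.factorial
    with hc
  set p : FormalMultilinearSeries ℝ ℝ ℂ :=
    fun n => ContinuousMultilinearMap.mkPiRing ℝ (Fin n) (c n) with hp
  have hnorm : ∀ (n : ℕ) (u : ℝ),
      ‖((u : ℂ) * Complex.I) ^ n * Complex.exp (u * t₀ * Complex.I) * h u‖
        = |u| ^ n * ‖h u‖ := by
    intro n u
    rw [norm_mul, norm_mul, norm_pow, norm_mul, norm_exp_mul_I]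
    simp
  have hFi : ∀ n : ℕ, Integrable
      (fun u : ℝ => ((u : ℂ) * Complex.I) ^ n * Complex.exp (u * t₀ * Complex.I) * h u) := by
    intro n
    refine (hint n).mono' ?_ ?_
    · exact ((((Complex.continuous_ofReal.mul continuous_const).pow n).aestronglyMeasurable.mul
        ((Complex.continuous_ofReal.mul continuous_const |>.mul
          continuous_const).cexp.aestronglyMeasurable))).mul hm
    · filter_upwards with u
      rw [hnorm]
  have hfac : ∀ n : ℕ, (0 : ℝ) < n.factorial := fun n => by exact_mod_cast n.factorial_pos
  have hcb : ∀ n : ℕ, ‖c n‖ ≤ B := by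
    intro n
    rw [hc]
    simp only [norm_div, Complex.norm_natCast]
    rw [div_le_iff₀ (hfac n)]
    calc ‖∫ u : ℝ, ((u : ℂ) * Complex.I) ^ n * Complex.exp (u * t₀ * Complex.I) * h u‖
        ≤ ∫ u : ℝ, ‖((u : ℂ) * Complex.I) ^ n * Complex.exp (u * t₀ * Complex.I) * h u‖ :=
          norm_integral_le_integral_norm _
      _ = ∫ u : ℝ, |u| ^ n * ‖h u‖ := by
          exact integral_congr_ae (Filter.Eventually.of_forall fun u => hnorm n u)
      _ ≤ B * n.factorial := hB n
  have hps : HasFPowerSeriesOnBall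
      (fun t : ℝ => ∫ u : ℝ, Complex.exp (u * t * Complex.I) * h u) p t₀ 1 := by
    refine ⟨?_, one_pos, ?_⟩
    · refine FormalMultilinearSeries.le_radius_of_bound p B fun n => ?_
      have hpn : ‖p n‖ = ‖c n‖ := ContinuousMultilinearMap.norm_mkPiRing (c n)
      simpa [hpn] using hcb n
    · intro y hy
      have hy1 : |y| < 1 := by
        have := mem_emetric_ball_zero_iff.1 hy
        rw [← Real.norm_eq_abs]
        simpa [Real.enorm_eq_ofReal_abs] using this
      set F : ℕ → ℝ → ℂ := fun n u =>
        ((u : ℂ) * Complex.I) ^ n * Complex.exp (u * t₀ * Complex.I) * h u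
          * ((y : ℂ) ^ n / n.factorial) with hF
      have hFint : ∀ n, Integrable (F n) := fun n => (hFi n).mul_const _
      have hFnorm : ∀ n u, ‖F n u‖ = (|y| ^ n / n.factorial) * (|u| ^ n * ‖h u‖) := by
        intro n u
        simp only [hF]
        rw [norm_mul, hnorm n u, norm_div, norm_pow, Complex.norm_real, Complex.norm_natCast,
          Real.norm_eq_abs]
        ring
      have hFsum : Summable fun n => ∫ u, ‖F n u‖ := by
        refine Summable.of_nonneg_of_le (fun n => integral_nonneg fun u => norm_nonneg _)
          (fun n => ?_) (((summable_geometric_of_lt_one (abs_nonneg y) hy1).mul_left (max B 0)))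
        have : ∫ u, ‖F n u‖ = (|y| ^ n / n.factorial) * ∫ u, |u| ^ n * ‖h u‖ := by
          rw [← integral_const_mul]
          exact integral_congr_ae (Filter.Eventually.of_forall fun u => hFnorm n u)
        rw [this]
        have h1 : (∫ u, |u| ^ n * ‖h u‖) ≤ (max B 0) * n.factorial := by
          refine (hB n).trans ?_
          have : B ≤ max B 0 := le_max_left _ _
          exact mul_le_mul_of_nonneg_right this (hfac n).le
        have h2 : (0 : ℝ) ≤ |y| ^ n / n.factorial := by positivity
        calc (|y| ^ n / n.factorial) * ∫ u, |u| ^ n * ‖h u‖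
            ≤ (|y| ^ n / n.factorial) * ((max B 0) * n.factorial) := by
              refine mul_le_mul_of_nonneg_left h1 h2
          _ = (max B 0) * |y| ^ n := by field_simp
      have key := MeasureTheory.hasSum_integral_of_summable_integral_norm hFint hFsum
      have htsum : ∀ u : ℝ, (∑' n, F n u) = Complex.exp (u * (t₀ + y) * Complex.I) * h u := by
        intro u
        have h1 : ∀ n : ℕ, F n u = (((u : ℂ) * y * Complex.I) ^ n / n.factorial)
            * (Complex.exp (u * t₀ * Complex.I) * h u) := by
          intro n
          rw [hF]
          field_simp
          ring
        rw [tsum_congr h1, tsum_mul_right]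
        have : (∑' n : ℕ, ((u : ℂ) * y * Complex.I) ^ n / n.factorial)
            = Complex.exp ((u : ℂ) * y * Complex.I) := by
          rw [Complex.exp_eq_exp_ℂ, NormedSpace.exp_eq_tsum_div]
        rw [this, ← mul_assoc, ← Complex.exp_add]
        congr 2
        push_cast
        ring
      have hval : (∫ u, (∑' n, F n u)) = ∫ u : ℝ, Complex.exp (u * (t₀ + y) * Complex.I) * h u :=
        integral_congr_ae (Filter.Eventually.of_forall htsum)
      rw [hval] at key
      push_cast
      convert key using 2 with n
      rw [hp]
      rw [ContinuousMultilinearMap.mkPiRing_apply]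
      have : (∫ u, F n u) = (∫ u : ℝ, ((u : ℂ) * Complex.I) ^ n
          * Complex.exp (u * t₀ * Complex.I) * h u) * ((y : ℂ) ^ n / n.factorial) := by
        rw [hF, integral_mul_const]
      rw [this, hc]
      simp only [Finset.prod_const, Finset.card_univ, Fintype.card_fin]
      rw [Complex.real_smul]
      push_cast
      ring
  exact hps.analyticAt

end Stmt11Aux

open Stmt11Aux

theorem stmt11
    (k : ℝ → ℂ) (hkmeas : Measurable k)
    (hM : ∀ n : ℕ, Integrable (fun u => |u| ^ n * ‖k u‖))
    (hlim : ∃ C : ℝ, ∀ᶠ n : ℕ in atTop,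
      (∫ u, |u| ^ n * ‖k u‖) / (n.factorial : ℝ) ≤ C)
    (hknz : ∀ a b : ℝ, a < b → ¬ (∀ᵐ u ∂(volume.restrict (Ioo a b)), k u = 0))
    (f : ℝ → ℝ) (hpos : ∀ x, 0 ≤ f x) (hmeas : Measurable f) (hone : ∫ x, f x = 1)
    (hf : ∀ t : ℝ, 0 ≤ t → (f t : ℂ) = ∫ u : ℝ, Complex.exp (u * t * Complex.I) * k u)
    (g : ℝ → ℝ) (hg : IntegrableOn g (Ioi 0))
    (hvanish : ∀ t : ℝ, 0 ≤ t → ∫ s in Ioi (0 : ℝ), f (t + s) * g s = 0) :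
    ∀ᵐ s ∂(volume.restrict (Ioi (0 : ℝ))), g s = 0 := by
  -- notation
  set M : ℕ → ℝ := fun n => ∫ u, |u| ^ n * ‖k u‖ with hMdef
  have hfac : ∀ n : ℕ, (0 : ℝ) < n.factorial := fun n => by exact_mod_cast n.factorial_pos
  have hMnonneg : ∀ n, 0 ≤ M n := fun n => integral_nonneg fun u => by positivity
  -- a uniform factorial bound for the moments
  obtain ⟨C, hC⟩ := hlim
  obtain ⟨N, hN⟩ := eventually_atTop.1 hC
  have hC0 : 0 ≤ C := le_trans (by positivity) (hN N le_rfl)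
  set B : ℝ := C + ∑ n ∈ Finset.range N, M n / n.factorial with hBdef
  have hsum_nonneg : (0:ℝ) ≤ ∑ n ∈ Finset.range N, M n / n.factorial :=
    Finset.sum_nonneg fun n _ => div_nonneg (hMnonneg n) (hfac n).le
  have hMB : ∀ n : ℕ, M n ≤ B * n.factorial := by
    intro n
    rw [← div_le_iff₀ (hfac n)]
    rcases le_or_gt N n with hn | hn
    · exact (hN n hn).trans (le_add_of_nonneg_right hsum_nonneg)
    · have : M n / n.factorial ≤ ∑ m ∈ Finset.range N, M m / m.factorial :=
        Finset.single_le_sum (f := fun m => M m / m.factorial)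
          (fun m _ => div_nonneg (hMnonneg m) (hfac m).le) (Finset.mem_range.2 hn)
      exact this.trans (le_add_of_nonneg_left hC0)
  -- the Fourier transform of g on (0, ∞)
  set φ : ℝ → ℂ := fun u => ∫ s in Ioi (0:ℝ), Complex.exp (s * u * Complex.I) * (g s : ℂ)
    with hφdef
  set G0 : ℝ := ∫ s in Ioi (0:ℝ), |g s| with hG0def
  have hG0 : 0 ≤ G0 := integral_nonneg fun s => abs_nonneg _
  have hφbound : ∀ u, ‖φ u‖ ≤ G0 := by
    intro u
    refine (norm_integral_le_integral_norm _).trans ?_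
    refine le_of_eq (integral_congr_ae (Filter.Eventually.of_forall fun s => ?_))
    show ‖Complex.exp (s * u * Complex.I) * ((g s : ℝ) : ℂ)‖ = |g s|
    rw [norm_mul, norm_exp_mul_I, one_mul, Complex.norm_real, Real.norm_eq_abs]
  have hφcont : Continuous φ := by
    rw [hφdef]
    refine continuous_of_dominated (fun u => ?_) (fun u => ?_) hg.norm ?_
    · exact ((Complex.continuous_ofReal.mul continuous_const).mul
        continuous_const).cexp.aestronglyMeasurable.mul
        (Complex.continuous_ofReal.comp_aestronglyMeasurable hg.aestronglyMeasurable)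
    · filter_upwards with s
      refine le_of_eq ?_
      show ‖Complex.exp (s * u * Complex.I) * ((g s : ℝ) : ℂ)‖ = ‖g s‖
      rw [norm_mul, norm_exp_mul_I, one_mul, Complex.norm_real]
    · filter_upwards with s
      have hc1 : Continuous fun u : ℝ => ((s : ℂ) * u * Complex.I) :=
        (continuous_const.mul Complex.continuous_ofReal).mul continuous_const
      exact hc1.cexp.mul continuous_const
  -- the product function h = k * φ
  set h : ℝ → ℂ := fun u => k u * φ u with hhdef
  have hhm : AEStronglyMeasurable h volume :=
    hkmeas.aestronglyMeasurable.mul hφcont.aestronglyMeasurable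
  have hhnorm : ∀ (n : ℕ) (u : ℝ), |u| ^ n * ‖h u‖ ≤ G0 * (|u| ^ n * ‖k u‖) := by
    intro n u
    rw [hhdef]
    have : ‖k u * φ u‖ ≤ ‖k u‖ * G0 := by
      rw [norm_mul]
      exact mul_le_mul_of_nonneg_left (hφbound u) (norm_nonneg _)
    calc |u| ^ n * ‖(fun u => k u * φ u) u‖ ≤ |u| ^ n * (‖k u‖ * G0) := by
          exact mul_le_mul_of_nonneg_left this (by positivity)
      _ = G0 * (|u| ^ n * ‖k u‖) := by ring
  have hhint : ∀ n : ℕ, Integrable (fun u : ℝ => |u| ^ n * ‖h u‖) := by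
    intro n
    refine Integrable.mono' (((hM n).const_mul G0)) ?_ ?_
    · exact ((continuous_abs.pow n).aestronglyMeasurable.mul hhm.norm)
    · filter_upwards with u
      rw [Real.norm_eq_abs, abs_of_nonneg (by positivity)]
      exact hhnorm n u
  have hhB : ∀ n : ℕ, (∫ u : ℝ, |u| ^ n * ‖h u‖) ≤ (G0 * B) * n.factorial := by
    intro n
    calc (∫ u : ℝ, |u| ^ n * ‖h u‖) ≤ ∫ u : ℝ, G0 * (|u| ^ n * ‖k u‖) := by
          refine integral_mono_of_nonneg (Filter.Eventually.of_forall fun u => by positivity)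
            ((hM n).const_mul G0) (Filter.Eventually.of_forall fun u => hhnorm n u)
      _ = G0 * M n := by rw [integral_const_mul]
      _ ≤ G0 * (B * n.factorial) := mul_le_mul_of_nonneg_left (hMB n) hG0
      _ = (G0 * B) * n.factorial := by ring
  -- Ψ is analytic
  have hΨana := analytic_aux h hhm hhint (G0 * B) hhB
  -- Ψ vanishes on [0, ∞) by Fubini and the hypothesis
  have hΨ0 : ∀ t : ℝ, 0 ≤ t → (∫ u : ℝ, Complex.exp (u * t * Complex.I) * h u) = 0 := by
    intro t ht
    have hgc : AEStronglyMeasurable (fun s : ℝ => ((g s : ℝ) : ℂ))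
        (volume.restrict (Ioi (0:ℝ))) :=
      Complex.continuous_ofReal.comp_aestronglyMeasurable hg.aestronglyMeasurable
    -- the two-variable function
    set Q : ℝ → ℝ → ℂ := fun u s =>
      Complex.exp (u * t * Complex.I) * k u * (Complex.exp (s * u * Complex.I) * (g s : ℂ))
      with hQdef
    have hk0 : Integrable (fun u : ℝ => ‖k u‖) := by
      have := hM 0
      simpa using this
    have hQint : Integrable (Function.uncurry Q)
        (volume.prod (volume.restrict (Ioi (0:ℝ)))) := by
      refine Integrable.mono' (hk0.mul_prod hg.norm) ?_ ?_
      · refine AEStronglyMeasurable.mul ?_ ?_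
        · refine AEStronglyMeasurable.mul ?_ ?_
          · exact (Continuous.aestronglyMeasurable (by
              have : Continuous fun p : ℝ × ℝ => ((p.1 : ℂ) * t * Complex.I) :=
                ((Complex.continuous_ofReal.comp continuous_fst).mul
                  continuous_const).mul continuous_const
              exact this.cexp))
          · exact (hkmeas.comp measurable_fst).aestronglyMeasurable
        · refine AEStronglyMeasurable.mul ?_ ?_
          · exact (Continuous.aestronglyMeasurable (by
              have : Continuous fun p : ℝ × ℝ => ((p.2 : ℂ) * p.1 * Complex.I) :=
                ((Complex.continuous_ofReal.comp continuous_snd).mul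
                  (Complex.continuous_ofReal.comp continuous_fst)).mul continuous_const
              exact this.cexp))
          · exact hgc.comp_snd
      · filter_upwards with p
        obtain ⟨u, s⟩ := p
        refine le_of_eq ?_
        show ‖Complex.exp (u * t * Complex.I) * k u
          * (Complex.exp (s * u * Complex.I) * ((g s : ℝ) : ℂ))‖ = ‖k u‖ * ‖g s‖
        rw [norm_mul, norm_mul, norm_mul, norm_exp_mul_I, norm_exp_mul_I, one_mul, one_mul,
          Complex.norm_real]
    -- step 1: the integrand of Ψ equals an iterated integral
    have step1 : (∫ u : ℝ, Complex.exp (u * t * Complex.I) * h u)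
        = ∫ u : ℝ, ∫ s in Ioi (0:ℝ), Q u s := by
      refine integral_congr_ae (Filter.Eventually.of_forall fun u => ?_)
      show Complex.exp (u * t * Complex.I) * h u = ∫ s in Ioi (0:ℝ), Q u s
      rw [hhdef]
      show Complex.exp (u * t * Complex.I) * (k u * φ u) = _
      rw [hφdef]
      show Complex.exp (u * t * Complex.I) * (k u *
        ∫ s in Ioi (0:ℝ), Complex.exp (s * u * Complex.I) * (g s : ℂ)) = _
      rw [← mul_assoc, ← integral_const_mul]
    -- step 2: swap the integrals
    have step2 : (∫ u : ℝ, ∫ s in Ioi (0:ℝ), Q u s)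
        = ∫ s in Ioi (0:ℝ), ∫ u : ℝ, Q u s := integral_integral_swap hQint
    -- step 3: compute the inner integral
    have step3 : (∫ s in Ioi (0:ℝ), ∫ u : ℝ, Q u s)
        = ∫ s in Ioi (0:ℝ), ((f (t + s) : ℂ) * (g s : ℂ)) := by
      refine setIntegral_congr_ae measurableSet_Ioi (Filter.Eventually.of_forall fun s hs => ?_)
      have hts : 0 ≤ t + s := by
        have : (0:ℝ) < s := hs
        linarith
      have : (∫ u : ℝ, Q u s)
          = (∫ u : ℝ, Complex.exp (u * ((t + s : ℝ) : ℂ) * Complex.I) * k u) * (g s : ℂ) := by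
        rw [← integral_mul_const]
        refine integral_congr_ae (Filter.Eventually.of_forall fun u => ?_)
        show Complex.exp (u * t * Complex.I) * k u
          * (Complex.exp (s * u * Complex.I) * (g s : ℂ))
          = Complex.exp (u * ((t + s : ℝ) : ℂ) * Complex.I) * k u * (g s : ℂ)
        rw [show ((u:ℂ) * (↑(t+s)) * Complex.I)
            = (u:ℂ) * t * Complex.I + (s:ℂ) * u * Complex.I by push_cast; ring,
          Complex.exp_add]
        ring
      rw [this, ← hf (t + s) hts]
    -- step 4: conclude using the hypothesis
    rw [step1, step2, step3]
    have h5 := integral_ofReal (𝕜 := ℂ) (f := fun s => f (t + s) * g s)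
      (μ := volume.restrict (Ioi (0:ℝ)))
    have h6 : (∫ s in Ioi (0:ℝ), ((f (t + s) * g s : ℝ) : ℂ)) = 0 :=
      calc (∫ s in Ioi (0:ℝ), ((f (t + s) * g s : ℝ) : ℂ))
          = ((∫ s in Ioi (0:ℝ), f (t + s) * g s : ℝ) : ℂ) := h5
        _ = 0 := by rw [hvanish t ht]; simp
    rw [← h6]
    refine integral_congr_ae (Filter.Eventually.of_forall fun s => ?_)
    push_cast
    ring
  -- by analyticity, Ψ vanishes identically
  have hΨall : ∀ t : ℝ, (∫ u : ℝ, Complex.exp (u * t * Complex.I) * h u) = 0 := by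
    have hev : (fun t : ℝ => ∫ u : ℝ, Complex.exp (u * t * Complex.I) * h u) =ᶠ[nhds 1] 0 := by
      filter_upwards [Ioi_mem_nhds (zero_lt_one)] with t (ht : (0:ℝ) < t)
      exact hΨ0 t ht.le
    have := hΨana.eqOn_zero_of_preconnected_of_eventuallyEq_zero isPreconnected_univ
      (mem_univ (1:ℝ)) hev
    intro t
    exact this (mem_univ t)
  -- h is integrable, so h = 0 a.e.
  have hhint0 : Integrable h := by
    have := hhint 0
    refine Integrable.mono' (by simpa using this) hhm ?_
    filter_upwards with u
    simp
  have hhz : ∀ᵐ u : ℝ, h u = 0 := fourier_inj h hhint0 hΨall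
  -- hence φ ≡ 0
  have hφ0 : ∀ u : ℝ, φ u = 0 := by
    by_contra hcon
    push_neg at hcon
    obtain ⟨u₀, hu₀⟩ := hcon
    have hopen : IsOpen {u : ℝ | φ u ≠ 0} := by
      have : {u : ℝ | φ u ≠ 0} = φ ⁻¹' ({0}ᶜ) := rfl
      rw [this]
      exact isOpen_compl_singleton.preimage hφcont
    obtain ⟨ε, hε, hball⟩ := Metric.isOpen_iff.1 hopen u₀ hu₀
    refine hknz (u₀ - ε) (u₀ + ε) (by linarith) ?_
    filter_upwards [ae_restrict_of_ae hhz, ae_restrict_mem measurableSet_Ioo] with u h1 h2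
    have hu : φ u ≠ 0 := by
      apply hball
      rw [Real.ball_eq_Ioo]
      exact h2
    have h1' : k u * φ u = 0 := h1
    rcases mul_eq_zero.1 h1' with hk | hph
    · exact hk
    · exact absurd hph hu
  -- conclude that g vanishes a.e. on (0, ∞)
  set h₂ : ℝ → ℂ := fun s => Set.indicator (Ioi (0:ℝ)) (fun s => ((g s : ℝ) : ℂ)) s with hh2def
  have hh2int : Integrable h₂ := by
    rw [hh2def]
    have : Integrable (Set.indicator (Ioi (0:ℝ)) (fun s => ((g s : ℝ) : ℂ))) :=
      (integrable_indicator_iff measurableSet_Ioi).2 hg.ofReal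
    exact this
  have hh2z : ∀ t : ℝ, ∫ s : ℝ, Complex.exp (s * t * Complex.I) * h₂ s = 0 := by
    intro t
    rw [← hφ0 t]
    show _ = ∫ s in Ioi (0:ℝ), Complex.exp (s * t * Complex.I) * (g s : ℂ)
    rw [← integral_indicator measurableSet_Ioi]
    refine integral_congr_ae (Filter.Eventually.of_forall fun s => ?_)
    show Complex.exp (s * t * Complex.I) * h₂ s
      = Set.indicator (Ioi (0:ℝ)) (fun s => Complex.exp (s * t * Complex.I) * (g s : ℂ)) s
    by_cases hsmem : s ∈ Ioi (0:ℝ)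
    · rw [Set.indicator_of_mem hsmem, hh2def]
      simp only [Set.indicator_of_mem hsmem]
    · rw [Set.indicator_of_notMem hsmem, hh2def]
      simp only [Set.indicator_of_notMem hsmem, mul_zero]
  have hg0 : ∀ᵐ s : ℝ, h₂ s = 0 := fourier_inj h₂ hh2int hh2z
  filter_upwards [ae_restrict_of_ae hg0, ae_restrict_mem measurableSet_Ioi] with s h1 h2
  have h3 : ((g s : ℝ) : ℂ) = 0 := by
    have h1' : Set.indicator (Ioi (0:ℝ)) (fun s => ((g s : ℝ) : ℂ)) s = 0 := h1
    rwa [Set.indicator_of_mem h2] at h1'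
  exact_mod_cast h3
end

section
/- Let (c_n) be a decreasing sequence in (0,1) with Σ_n 1/(−log c_n) = ∞, and let (b_k)_{k≥0} and (b'_k)_{k≥0} be two summable sequences of nonnegative reals such that Σ_{k≥0} b_k c_n^k = Σ_{k≥0} b'_k c_n^k for all n. Then b_k = b'_k for all k ≥ 0. -/
open Set

lemma stmt14_aux (a : ℕ → ℝ) (ha : ∀ k, 0 ≤ a k) (hs : Summable a) :
    HasFPowerSeriesOnBall (fun x : ℝ => ∑' k : ℕ, a k * x ^ k)
      (FormalMultilinearSeries.ofScalars ℝ a) 0 1 := by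
  set p := FormalMultilinearSeries.ofScalars ℝ a with hp
  have hrad : (1 : ENNReal) ≤ p.radius := by
    apply FormalMultilinearSeries.le_radius_of_bound _ (∑' k, a k) (r := 1)
    intro n
    rw [FormalMultilinearSeries.ofScalars_norm]
    simp only [NNReal.coe_one, one_pow, mul_one, Real.norm_eq_abs, abs_of_nonneg (ha n)]
    exact Summable.le_tsum hs n (fun i _ => ha i)
  have hpos : (0 : ENNReal) < p.radius := lt_of_lt_of_le one_pos hrad
  have hball := p.hasFPowerSeriesOnBall hpos
  have hsum : p.sum = fun x : ℝ => ∑' k : ℕ, a k * x ^ k := by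
    funext x
    rw [show p.sum = FormalMultilinearSeries.ofScalarsSum a from rfl,
      FormalMultilinearSeries.ofScalarsSum_eq_tsum]
    simp [smul_eq_mul]
  exact hsum ▸ (hball.mono one_pos hrad)

theorem stmt14
    (c : ℕ → ℝ) (hc : ∀ n, c n ∈ Ioo (0 : ℝ) 1) (hanti : StrictAnti c)
    (hdiv : ¬ Summable (fun n => 1 / (-Real.log (c n))))
    (b b' : ℕ → ℝ) (hb : ∀ k, 0 ≤ b k) (hb' : ∀ k, 0 ≤ b' k)
    (hbsum : Summable b) (hb'sum : Summable b')
    (heq : ∀ n, ∑' k : ℕ, b k * c n ^ k = ∑' k : ℕ, b' k * c n ^ k) :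
    ∀ k, b k = b' k := by
  set f : ℝ → ℝ := fun x => ∑' k : ℕ, b k * x ^ k with hf
  set g : ℝ → ℝ := fun x => ∑' k : ℕ, b' k * x ^ k with hg
  have hfb := stmt14_aux b hb hbsum
  have hgb := stmt14_aux b' hb' hb'sum
  set U : Set ℝ := Metric.eball (0 : ℝ) 1 with hU
  have hfo : AnalyticOnNhd ℝ f U := hfb.analyticOnNhd
  have hgo : AnalyticOnNhd ℝ g U := hgb.analyticOnNhd
  have hUball : U = Metric.ball (0 : ℝ) 1 := by
    rw [hU, show ((1 : ENNReal)) = ((1 : NNReal) : ENNReal) by simp,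
      Metric.emetric_ball_nnreal]
    norm_num
  -- limit of c
  have hbdd : BddBelow (range c) := ⟨0, fun x ⟨n, hn⟩ => hn ▸ (hc n).1.le⟩
  set L : ℝ := ⨅ n, c n with hL
  have htend : Filter.Tendsto c Filter.atTop (nhds L) :=
    tendsto_atTop_ciInf hanti.antitone hbdd
  have hLlt : ∀ n, L < c n := fun n =>
    lt_of_le_of_lt (ciInf_le hbdd (n + 1)) (hanti (Nat.lt_succ_self n))
  have hL0 : 0 ≤ L := le_ciInf fun n => (hc n).1.le
  have hL1 : L < 1 := lt_of_le_of_lt (ciInf_le hbdd 0) (hc 0).2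
  have hLU : L ∈ U := by
    rw [hUball]
    simp [Real.dist_eq, abs_of_nonneg hL0, hL1]
  have htend' : Filter.Tendsto c Filter.atTop (nhdsWithin L {L}ᶜ) := by
    rw [tendsto_nhdsWithin_iff]
    exact ⟨htend, Filter.Eventually.of_forall fun n => (hLlt n).ne'⟩
  have hfreq : ∃ᶠ z in nhdsWithin L {L}ᶜ, f z = g z :=
    htend'.frequently (Filter.Frequently.of_forall fun n => heq n)
  have hpre : IsPreconnected U := by
    rw [hUball]
    exact (convex_ball (0:ℝ) 1).isPreconnected
  have heqon : EqOn f g U :=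
    hfo.eqOn_of_preconnected_of_frequently_eq hgo hpre hLU hfreq
  have h0U : (0 : ℝ) ∈ U := by rw [hUball]; simp
  have hev : f =ᶠ[nhds 0] g :=
    Filter.eventuallyEq_of_mem ((EMetric.isOpen_ball).mem_nhds h0U) heqon
  have hpq : FormalMultilinearSeries.ofScalars ℝ b = FormalMultilinearSeries.ofScalars ℝ b' :=
    HasFPowerSeriesAt.eq_formalMultilinearSeries hfb.hasFPowerSeriesAt
      ((hgb.hasFPowerSeriesAt).congr hev.symm)
  have := FormalMultilinearSeries.ofScalars_series_injective (𝕜 := ℝ) (E := ℝ) hpq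
  exact fun k => congrFun this k
end

section
/- Let μ be a probability measure on ℝ whose support is not contained in (-∞,0). Suppose there exists a probability measure ν on ℝ with support contained in (-∞,0] such that the convolution μ*ν belongs to the class 𝒞 of measures determined by their convolution powers restricted to [0,∞). Then μ belongs to 𝒞. -/
open MeasureTheory Set

/-- The `n`-fold convolution power of a measure on `ℝ`, with `μ^{*0} = δ₀`. -/
noncomputable def convPow (μ : Measure ℝ) : ℕ → Measure ℝ
  | 0 => Measure.dirac 0
  | n + 1 => (convPow μ n).conv μ

/-- The class 𝒞 of probability measures on `ℝ` determined by their convolution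
powers restricted to `[0,∞)`. -/
def MemClassC (μ : Measure ℝ) : Prop :=
  ∀ μ₁ : Measure ℝ, IsProbabilityMeasure μ₁ →
    (∀ n : ℕ, 1 ≤ n → ∀ s : Set ℝ, MeasurableSet s → s ⊆ Ici 0 →
      convPow μ n s = convPow μ₁ n s) → μ = μ₁

namespace StmtAux

open Real
open scoped ENNReal

lemma lintegral_conv (μ ν : Measure ℝ) [SFinite μ] [SFinite ν] {f : ℝ → ℝ≥0∞}
    (hf : Measurable f) :
    ∫⁻ z, f z ∂(μ.conv ν) = ∫⁻ x, ∫⁻ y, f (x + y) ∂ν ∂μ := by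
  rw [Measure.conv, lintegral_map hf measurable_add, lintegral_prod]
  exact (hf.comp measurable_add).aemeasurable

lemma conv_apply (μ ν : Measure ℝ) [SFinite μ] [SFinite ν] {s : Set ℝ}
    (hs : MeasurableSet s) :
    μ.conv ν s = ∫⁻ x, ν {y | x + y ∈ s} ∂μ := by
  rw [← lintegral_indicator_one hs, lintegral_conv μ ν (measurable_one.indicator hs)]
  refine lintegral_congr fun x => ?_
  have : ∀ y : ℝ, s.indicator (1 : ℝ → ℝ≥0∞) (x + y)
      = {y : ℝ | x + y ∈ s}.indicator (1 : ℝ → ℝ≥0∞) y := by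
    intro y; by_cases h : x + y ∈ s <;> simp [Set.indicator, h]
  simp_rw [this]
  rw [lintegral_indicator_one
    (show MeasurableSet {y : ℝ | x + y ∈ s} from measurable_const_add x hs)]

lemma measurable_conv_slice {s : Set ℝ} (hs : MeasurableSet s) (ρ : Measure ℝ) [SFinite ρ] :
    Measurable fun x : ℝ => ρ {y | x + y ∈ s} := by
  have : ∀ x : ℝ, {y | x + y ∈ s} = Prod.mk x ⁻¹' {p : ℝ × ℝ | p.1 + p.2 ∈ s} := by
    intro x; rfl
  simp_rw [this]
  exact measurable_measure_prodMk_left (measurable_add hs)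

lemma conv_assoc (μ ν ρ : Measure ℝ) [SFinite μ] [SFinite ν] [SFinite ρ] :
    (μ.conv ν).conv ρ = μ.conv (ν.conv ρ) := by
  ext s hs
  rw [conv_apply _ _ hs, conv_apply _ _ hs,
    lintegral_conv μ ν (measurable_conv_slice hs ρ)]
  refine lintegral_congr fun x => ?_
  rw [conv_apply _ _ (show MeasurableSet {y : ℝ | x + y ∈ s} from measurable_const_add x hs)]
  refine lintegral_congr fun y => ?_
  congr 1
  ext z
  simp [Set.mem_setOf_eq, add_assoc]

instance convPow_prob (μ : Measure ℝ) [IsProbabilityMeasure μ] (n : ℕ) :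
    IsProbabilityMeasure (convPow μ n) := by
  induction n with
  | zero => exact Measure.dirac.isProbabilityMeasure
  | succ n ih => exact Measure.probabilitymeasure_of_probabilitymeasures_conv _ _

lemma ae_nonpos {τ : Measure ℝ} (hτ : τ (Ioi 0) = 0) : ∀ᵐ y ∂τ, y ≤ 0 := by
  rw [ae_iff]
  convert hτ using 2
  ext y; simp

lemma conv_nonpos {τ σ : Measure ℝ} [SFinite τ] [SFinite σ]
    (hτ : τ (Ioi 0) = 0) (hσ : σ (Ioi 0) = 0) : τ.conv σ (Ioi 0) = 0 := by
  rw [conv_apply _ _ measurableSet_Ioi]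
  rw [lintegral_eq_zero_iff]
  · filter_upwards [ae_nonpos hτ] with x hx
    have : {y : ℝ | x + y ∈ Ioi 0} ⊆ Ioi 0 := by
      intro y hy
      simp only [mem_setOf_eq, mem_Ioi] at *
      linarith
    exact le_antisymm ((measure_mono this).trans hσ.le) zero_le
  · exact measurable_conv_slice measurableSet_Ioi σ

lemma convPow_nonpos {τ : Measure ℝ} [IsProbabilityMeasure τ] (hτ : τ (Ioi 0) = 0) (n : ℕ) :
    convPow τ n (Ioi 0) = 0 := by
  induction n with
  | zero =>
      rw [convPow, Measure.dirac_apply' _ measurableSet_Ioi]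
      simp
  | succ n ih => exact conv_nonpos ih hτ

lemma convPow_conv (μ ν : Measure ℝ) [IsProbabilityMeasure μ] [IsProbabilityMeasure ν] (n : ℕ) :
    convPow (μ.conv ν) n = (convPow μ n).conv (convPow ν n) := by
  induction n with
  | zero => simp [convPow]
  | succ n ih =>
      show (convPow (μ.conv ν) n).conv (μ.conv ν) = _
      rw [ih]
      show _ = ((convPow μ n).conv μ).conv ((convPow ν n).conv ν)
      rw [conv_assoc, conv_assoc]
      congr 1
      rw [← conv_assoc, ← conv_assoc, Measure.conv_comm μ (convPow ν n)]

lemma conv_eq_on_Ici {κ κ' τ : Measure ℝ} [IsProbabilityMeasure κ] [IsProbabilityMeasure κ']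
    [IsProbabilityMeasure τ] (hτ : τ (Ioi 0) = 0)
    (h : ∀ s : Set ℝ, MeasurableSet s → s ⊆ Ici 0 → κ s = κ' s)
    {s : Set ℝ} (hs : MeasurableSet s) (hsub : s ⊆ Ici 0) :
    κ.conv τ s = κ'.conv τ s := by
  rw [Measure.conv_comm, Measure.conv_comm κ', conv_apply _ _ hs, conv_apply _ _ hs]
  refine lintegral_congr_ae ?_
  filter_upwards [ae_nonpos hτ] with y hy
  refine h _ (show MeasurableSet {x : ℝ | y + x ∈ s} from measurable_const_add y hs) ?_
  intro x hx
  have := hsub hx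
  simp only [mem_Ici, mem_setOf_eq] at *
  linarith

lemma integrable_of_cont {γ : Measure ℝ} [IsFiniteMeasure γ]
    (hγ : γ (Icc (0:ℝ) 1)ᶜ = 0) (g : ℝ → ℝ) (hg : Continuous g) :
    Integrable g γ := by
  obtain ⟨C, hC⟩ := isCompact_Icc.exists_bound_of_continuousOn (s := Icc (0:ℝ) 1) hg.continuousOn
  have hae : ∀ᵐ x ∂γ, x ∈ Icc (0:ℝ) 1 := by
    rw [ae_iff]; exact hγ
  refine ⟨hg.aestronglyMeasurable, HasFiniteIntegral.of_bounded (C := C) ?_⟩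
  filter_upwards [hae] with x hx using hC x hx

lemma ae_mem_Icc {γ : Measure ℝ} (hγ : γ (Icc (0:ℝ) 1)ᶜ = 0) :
    ∀ᵐ x ∂γ, x ∈ Icc (0:ℝ) 1 := by
  rw [ae_iff]; exact hγ

/-- finite measures vanishing outside `[0,1]` with equal moments are equal -/
lemma ext_of_moments (γ γ' : Measure ℝ) [IsFiniteMeasure γ] [IsFiniteMeasure γ']
    (hγ : γ (Icc (0:ℝ) 1)ᶜ = 0) (hγ' : γ' (Icc (0:ℝ) 1)ᶜ = 0)
    (h : ∀ n : ℕ, ∫⁻ x, ENNReal.ofReal (x ^ n) ∂γ = ∫⁻ x, ENNReal.ofReal (x ^ n) ∂γ') :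
    γ = γ' := by
  have hmom : ∀ n : ℕ, ∫ x, x ^ n ∂γ = ∫ x, x ^ n ∂γ' := by
    intro n
    have e1 : ∀ (m : Measure ℝ), m (Icc (0:ℝ) 1)ᶜ = 0 → [IsFiniteMeasure m] →
        ∫ x, x ^ n ∂m = (∫⁻ x, ENNReal.ofReal (x ^ n) ∂m).toReal := by
      intro m hm _
      rw [integral_eq_lintegral_of_nonneg_ae]
      · filter_upwards [ae_mem_Icc hm] with x hx using pow_nonneg hx.1 n
      · exact (continuous_pow n).aestronglyMeasurable
    rw [e1 γ hγ, e1 γ' hγ', h n]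
  have hpoly : ∀ q : Polynomial ℝ, ∫ x, q.eval x ∂γ = ∫ x, q.eval x ∂γ' := by
    intro q
    have e2 : ∀ (m : Measure ℝ), m (Icc (0:ℝ) 1)ᶜ = 0 → [IsFiniteMeasure m] →
        ∫ x, q.eval x ∂m
          = ∑ i ∈ Finset.range (q.natDegree + 1), q.coeff i * ∫ x, x ^ i ∂m := by
      intro m hm _
      have : ∀ x : ℝ, q.eval x = ∑ i ∈ Finset.range (q.natDegree + 1), q.coeff i * x ^ i := by
        intro x; exact q.eval_eq_sum_range x
      simp_rw [this]
      rw [integral_finset_sum]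
      · exact Finset.sum_congr rfl fun i _ => integral_const_mul _ _
      · intro i _
        exact (integrable_of_cont hm _ (continuous_pow i)).const_mul _
    rw [e2 γ hγ, e2 γ' hγ']
    exact Finset.sum_congr rfl fun i _ => by rw [hmom i]
  refine ext_of_forall_lintegral_eq_of_IsFiniteMeasure fun f => ?_
  set F : ℝ → ℝ := fun x => (f x : ℝ) with hF
  have hFcont : Continuous F := NNReal.continuous_coe.comp f.continuous
  have hFint : ∀ (m : Measure ℝ), m (Icc (0:ℝ) 1)ᶜ = 0 → [IsFiniteMeasure m] →
      ∫⁻ x, (f x : ℝ≥0∞) ∂m = ENNReal.ofReal (∫ x, F x ∂m) := fun m hm _ =>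
    lintegral_coe_eq_integral f (integrable_of_cont hm F hFcont)
  rw [hFint γ hγ, hFint γ' hγ']
  congr 1
  refine eq_of_forall_dist_le fun ε hε => ?_
  set K : ℝ := (γ univ).toReal + (γ' univ).toReal + 1 with hK
  have hKpos : 0 < K := by positivity
  set δ : ℝ := ε / K with hδ
  have hδpos : 0 < δ := div_pos hε hKpos
  set Fc : C(Icc (0:ℝ) 1, ℝ) := ⟨fun x => F x.1, hFcont.comp continuous_subtype_val⟩ with hFc
  obtain ⟨q, hq⟩ := exists_polynomial_near_continuousMap 0 1 Fc δ hδpos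
  have hqF : ∀ x ∈ Icc (0:ℝ) 1, ‖F x - q.eval x‖ ≤ δ := by
    intro x hx
    have := (q.toContinuousMapOn (Icc (0:ℝ) 1) - Fc).norm_coe_le_norm ⟨x, hx⟩
    have h2 : (q.toContinuousMapOn (Icc (0:ℝ) 1) - Fc) ⟨x, hx⟩ = q.eval x - F x := by
      simp [hFc, Polynomial.toContinuousMapOn, Polynomial.toContinuousMap]
    rw [h2] at this
    rw [norm_sub_rev]
    exact this.trans hq.le
  have hbound : ∀ (m : Measure ℝ), m (Icc (0:ℝ) 1)ᶜ = 0 → [IsFiniteMeasure m] →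
      ‖∫ x, F x ∂m - ∫ x, q.eval x ∂m‖ ≤ δ * (m univ).toReal := by
    intro m hm _
    rw [← integral_sub (integrable_of_cont hm F hFcont)
      (integrable_of_cont hm (fun x => q.eval x) q.continuous)]
    refine norm_integral_le_of_norm_le_const ?_
    filter_upwards [ae_mem_Icc hm] with x hx using hqF x hx
  calc dist (∫ x, F x ∂γ) (∫ x, F x ∂γ')
      ≤ dist (∫ x, F x ∂γ) (∫ x, q.eval x ∂γ)
        + dist (∫ x, q.eval x ∂γ) (∫ x, F x ∂γ') := dist_triangle _ _ _
    _ = dist (∫ x, F x ∂γ) (∫ x, q.eval x ∂γ)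
        + dist (∫ x, q.eval x ∂γ') (∫ x, F x ∂γ') := by rw [hpoly q]
    _ ≤ δ * (γ univ).toReal + δ * (γ' univ).toReal := by
        gcongr
        · exact hbound γ hγ
        · rw [dist_comm]; exact hbound γ' hγ'
    _ ≤ δ * K := by
        rw [hK, mul_add]
        nlinarith [ENNReal.toReal_nonneg (a := γ univ), ENNReal.toReal_nonneg (a := γ' univ),
          hδpos.le]
    _ = ε := by rw [hδ, div_mul_cancel₀]; exact hKpos.ne'

/-- finite measures supported on `(-∞,0]` with equal Laplace transforms at naturals agree -/
lemma ext_of_exp_moments (α β : Measure ℝ) [IsFiniteMeasure α] [IsFiniteMeasure β]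
    (hα : α (Ioi 0) = 0) (hβ : β (Ioi 0) = 0)
    (h : ∀ n : ℕ, ∫⁻ x, ENNReal.ofReal (Real.exp (n * x)) ∂α
        = ∫⁻ x, ENNReal.ofReal (Real.exp (n * x)) ∂β) : α = β := by
  have hpre : Real.exp ⁻¹' (Icc (0:ℝ) 1)ᶜ = Ioi 0 := by
    ext x
    simp only [mem_preimage, mem_compl_iff, mem_Icc, mem_Ioi, not_and, not_le]
    constructor
    · intro hx
      have := hx (Real.exp_pos x).le
      have := Real.exp_le_one_iff (x := x)
      by_contra hc; push_neg at hc
      linarith [Real.exp_le_one_iff.mpr hc]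
    · intro hx _
      have := Real.exp_le_one_iff (x := x)
      by_contra hc; push_neg at hc
      linarith [this.mp hc]
  have hsupp : ∀ (m : Measure ℝ), m (Ioi 0) = 0 → (m.map Real.exp) (Icc (0:ℝ) 1)ᶜ = 0 := by
    intro m hm
    rw [Measure.map_apply Real.measurable_exp measurableSet_Icc.compl, hpre, hm]
  have hmomeq : ∀ (m : Measure ℝ) (n : ℕ),
      ∫⁻ x, ENNReal.ofReal (x ^ n) ∂(m.map Real.exp)
        = ∫⁻ x, ENNReal.ofReal (Real.exp (n * x)) ∂m := by
    intro m n
    rw [lintegral_map (by fun_prop : Measurable fun x : ℝ => ENNReal.ofReal (x ^ n))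
      Real.measurable_exp]
    simp_rw [Real.exp_nat_mul]
  have key : α.map Real.exp = β.map Real.exp := by
    refine ext_of_moments _ _ (hsupp α hα) (hsupp β hβ) fun n => ?_
    rw [hmomeq, hmomeq, h n]
  ext s hs
  have hsplit : ∀ (m : Measure ℝ), m (Ioi 0) = 0 → m s = m (s ∩ Iic 0) := by
    intro m hm
    rw [← measure_inter_add_diff s measurableSet_Iic]
    have : m (s \ Iic 0) = 0 :=
      le_antisymm ((measure_mono (fun x hx => by simpa [not_le] using hx.2)).trans hm.le)
        zero_le
    rw [this, add_zero]
  have hE : MeasurableSet (Ioi (0:ℝ) ∩ Real.log ⁻¹' (s ∩ Iic 0)) :=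
    measurableSet_Ioi.inter (Real.measurable_log (hs.inter measurableSet_Iic))
  have hEpre : Real.exp ⁻¹' (Ioi (0:ℝ) ∩ Real.log ⁻¹' (s ∩ Iic 0)) = s ∩ Iic 0 := by
    ext x
    simp [Real.exp_pos x, Real.log_exp]
  have hmap : ∀ (m : Measure ℝ),
      m (s ∩ Iic 0) = (m.map Real.exp) (Ioi (0:ℝ) ∩ Real.log ⁻¹' (s ∩ Iic 0)) := by
    intro m
    rw [Measure.map_apply Real.measurable_exp hE, hEpre]
  rw [hsplit α hα, hsplit β hβ, hmap α, hmap β, key]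

lemma lintegral_exp_conv (α ν : Measure ℝ) [SFinite α] [SFinite ν] (n : ℕ) :
    ∫⁻ z, ENNReal.ofReal (Real.exp (n * z)) ∂(α.conv ν)
      = (∫⁻ x, ENNReal.ofReal (Real.exp (n * x)) ∂α)
        * (∫⁻ y, ENNReal.ofReal (Real.exp (n * y)) ∂ν) := by
  have hm : Measurable fun x : ℝ => ENNReal.ofReal (Real.exp (n * x)) := by fun_prop
  rw [lintegral_conv _ _ hm]
  have : ∀ x y : ℝ, ENNReal.ofReal (Real.exp (n * (x + y)))
      = ENNReal.ofReal (Real.exp (n * x)) * ENNReal.ofReal (Real.exp (n * y)) := by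
    intro x y
    rw [mul_add, Real.exp_add, ENNReal.ofReal_mul (Real.exp_nonneg _)]
  simp_rw [this]
  rw [← lintegral_mul_const _ hm]
  refine lintegral_congr fun x => ?_
  rw [lintegral_const_mul _ hm]

lemma ennreal_mul_cancel {a b c : ℝ≥0∞} (h0 : c ≠ 0) (ht : c ≠ ∞) (h : a * c = b * c) :
    a = b := by
  have hinv := ENNReal.mul_inv_cancel h0 ht
  calc a = a * (c * c⁻¹) := by rw [hinv, mul_one]
    _ = (a * c) * c⁻¹ := by rw [mul_assoc]
    _ = (b * c) * c⁻¹ := by rw [h]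
    _ = b * (c * c⁻¹) := by rw [mul_assoc]
    _ = b := by rw [hinv, mul_one]

end StmtAux

open StmtAux Real
open scoped ENNReal

theorem stmt15
    (μ : Measure ℝ) [IsProbabilityMeasure μ] (hsupp : μ (Ici 0) ≠ 0)
    (ν : Measure ℝ) [IsProbabilityMeasure ν] (hν : ν (Ioi 0) = 0)
    (hconv : MemClassC (μ.conv ν)) :
    MemClassC μ := by
  intro μ₁ hμ₁ h
  have hpow1 : ∀ (m : Measure ℝ) [SFinite m], convPow m 1 = m := by
    intro m _
    show (Measure.dirac 0).conv m = m
    simp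
  have h1 : ∀ s : Set ℝ, MeasurableSet s → s ⊆ Ici 0 → μ s = μ₁ s := by
    intro s hs hsub
    have := h 1 le_rfl s hs hsub
    rwa [hpow1 μ, hpow1 μ₁] at this
  have key : μ.conv ν = μ₁.conv ν := by
    refine hconv (μ₁.conv ν) inferInstance fun n hn s hs hsub => ?_
    rw [convPow_conv, convPow_conv]
    exact conv_eq_on_Ici (convPow_nonpos hν n) (fun t ht htsub => h n hn t ht htsub) hs hsub
  have hσ : μ.restrict (Ici 0) = μ₁.restrict (Ici 0) := by
    ext s hs
    rw [Measure.restrict_apply hs, Measure.restrict_apply hs]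
    exact h1 _ (hs.inter measurableSet_Ici) inter_subset_right
  have hdecomp : ∀ m : Measure ℝ, m.restrict (Iio 0) + m.restrict (Ici 0) = m := by
    intro m
    have := Measure.restrict_add_restrict_compl (μ := m) (s := Iio 0) measurableSet_Iio
    rwa [compl_Iio] at this
  set α := μ.restrict (Iio 0) with hαdef
  set β := μ₁.restrict (Iio 0) with hβdef
  have hconvdec : α.conv ν + (μ.restrict (Ici 0)).conv ν
      = β.conv ν + (μ.restrict (Ici 0)).conv ν := by
    calc α.conv ν + (μ.restrict (Ici 0)).conv ν
        = (α + μ.restrict (Ici 0)).conv ν := (Measure.add_conv _ _ _).symm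
      _ = μ.conv ν := by rw [hdecomp]
      _ = μ₁.conv ν := key
      _ = (β + μ₁.restrict (Ici 0)).conv ν := by rw [hdecomp]
      _ = β.conv ν + (μ₁.restrict (Ici 0)).conv ν := Measure.add_conv _ _ _
      _ = β.conv ν + (μ.restrict (Ici 0)).conv ν := by rw [hσ]
  have hcancel : α.conv ν = β.conv ν := by
    ext s hs
    have hc := congrArg (fun m : Measure ℝ => m s) hconvdec
    simp only [Measure.add_apply] at hc
    exact (ENNReal.add_left_inj (measure_ne_top _ s)).mp hc
  have hempty : Ioi (0:ℝ) ∩ Iio 0 = ∅ := by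
    ext x
    simp only [mem_inter_iff, mem_Ioi, mem_Iio, mem_empty_iff_false, iff_false, not_and, not_lt]
    intro hx; linarith
  have hα0 : α (Ioi 0) = 0 := by
    rw [hαdef, Measure.restrict_apply measurableSet_Ioi, hempty, measure_empty]
  have hβ0 : β (Ioi 0) = 0 := by
    rw [hβdef, Measure.restrict_apply measurableSet_Ioi, hempty, measure_empty]
  have hmom : ∀ n : ℕ, ∫⁻ x, ENNReal.ofReal (Real.exp (n * x)) ∂α
      = ∫⁻ x, ENNReal.ofReal (Real.exp (n * x)) ∂β := by
    intro n
    have hm : Measurable fun x : ℝ => ENNReal.ofReal (Real.exp (n * x)) := by fun_prop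
    have hL1 : (∫⁻ y, ENNReal.ofReal (Real.exp (n * y)) ∂ν) ≤ 1 := by
      calc ∫⁻ y, ENNReal.ofReal (Real.exp (n * y)) ∂ν ≤ ∫⁻ _, 1 ∂ν := by
            refine lintegral_mono_ae ?_
            filter_upwards [ae_nonpos hν] with y hy
            rw [show (1:ℝ≥0∞) = ENNReal.ofReal 1 by simp]
            exact ENNReal.ofReal_le_ofReal (Real.exp_le_one_iff.mpr
              (mul_nonpos_of_nonneg_of_nonpos (Nat.cast_nonneg n) hy))
        _ = 1 := by simp
    have hLtop : (∫⁻ y, ENNReal.ofReal (Real.exp (n * y)) ∂ν) ≠ ∞ :=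
      (hL1.trans_lt (by norm_num)).ne
    have hL0 : (∫⁻ y, ENNReal.ofReal (Real.exp (n * y)) ∂ν) ≠ 0 := by
      have hpos : 0 < ∫⁻ y, ENNReal.ofReal (Real.exp (n * y)) ∂ν := by
        rw [lintegral_pos_iff_support hm]
        have hsup : Function.support (fun y : ℝ => ENNReal.ofReal (Real.exp (n * y))) = univ := by
          ext y
          simp only [Function.mem_support, ne_eq, ENNReal.ofReal_eq_zero, not_le, mem_univ,
            iff_true]
          exact Real.exp_pos _
        rw [hsup]
        simp
      exact hpos.ne'
    refine ennreal_mul_cancel hL0 hLtop ?_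
    rw [← lintegral_exp_conv, ← lintegral_exp_conv, hcancel]
  have hαβ : α = β := ext_of_exp_moments α β hα0 hβ0 hmom
  calc μ = α + μ.restrict (Ici 0) := (hdecomp μ).symm
    _ = β + μ₁.restrict (Ici 0) := by rw [hαβ, hσ]
    _ = μ₁ := hdecomp μ₁
end

section
/- Let μ, μ₁ be probability measures on ℝ such that μ^{*n} = μ₁^{*n} on [0,∞) for all n ≥ 1, and let g be a probability density on [0,∞). Define h(x) = ∫_ℝ g(y−x) μ(dy) and h₁(x) = ∫_ℝ g(y−x) μ₁(dy), and let μ̄, μ̄₁ be the absolutely continuous measures with densities h, h₁. Then μ̄^{*n} = μ̄₁^{*n} on [0,∞) for all n ≥ 1. -/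
open MeasureTheory Set

namespace Stmt16Aux

instance convPow.sfinite (μ : Measure ℝ) [SFinite μ] (n : ℕ) : SFinite (convPow μ n) := by
  induction n with
  | zero => exact inferInstanceAs (SFinite (Measure.dirac (0 : ℝ)))
  | succ n ih => exact inferInstanceAs (SFinite ((convPow μ n).conv μ))

lemma conv_assoc (μ ν ρ : Measure ℝ) [SFinite μ] [SFinite ν] [SFinite ρ] :
    (μ.conv ν).conv ρ = μ.conv (ν.conv ρ) := by
  unfold Measure.conv
  have h1 : (Measure.map (fun x : ℝ × ℝ => x.1 + x.2) (μ.prod ν)).prod ρ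
      = Measure.map (Prod.map (fun x : ℝ × ℝ => x.1 + x.2) id) ((μ.prod ν).prod ρ) := by
    conv_lhs => rw [← Measure.map_id (μ := ρ)]
    exact Measure.map_prod_map _ _ (by fun_prop) measurable_id
  have h2 : μ.prod (Measure.map (fun x : ℝ × ℝ => x.1 + x.2) (ν.prod ρ))
      = Measure.map (Prod.map (id : ℝ → ℝ) (fun x : ℝ × ℝ => x.1 + x.2)) (μ.prod (ν.prod ρ)) := by
    conv_lhs => rw [← Measure.map_id (μ := μ)]
    exact Measure.map_prod_map _ _ measurable_id (by fun_prop)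
  rw [h1, h2, Measure.map_map (by fun_prop) (by fun_prop),
    Measure.map_map (by fun_prop) (by fun_prop),
    ← Measure.prodAssoc_prod (μ := μ) (ν := ν) (τ := ρ),
    Measure.map_map (by fun_prop) (by fun_prop)]
  congr 1
  ext p
  obtain ⟨⟨a, b⟩, c⟩ := p
  simp [MeasurableEquiv.prodAssoc, Function.comp, add_assoc]

lemma conv_apply (κ lam : Measure ℝ) [SFinite κ] [SFinite lam] {s : Set ℝ}
    (hs : MeasurableSet s) :
    κ.conv lam s = ∫⁻ a, lam ((fun b => a + b) ⁻¹' s) ∂κ := by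
  unfold Measure.conv
  rw [Measure.map_apply (by fun_prop) hs,
    Measure.prod_apply (hs.preimage (by fun_prop))]
  rfl

lemma convPow_conv (μ ν : Measure ℝ) [SFinite μ] [SFinite ν] (n : ℕ) :
    convPow (μ.conv ν) n = (convPow μ n).conv (convPow ν n) := by
  induction n with
  | zero =>
      show Measure.dirac 0 = (Measure.dirac 0).conv (Measure.dirac 0)
      simp
  | succ n ih =>
      show (convPow (μ.conv ν) n).conv (μ.conv ν)
          = ((convPow μ n).conv μ).conv ((convPow ν n).conv ν)
      rw [ih]
      rw [conv_assoc (convPow μ n) (convPow ν n) (μ.conv ν),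
        ← conv_assoc (convPow ν n) μ ν, Measure.conv_comm (convPow ν n) μ,
        conv_assoc μ (convPow ν n) ν, ← conv_assoc (convPow μ n) μ ((convPow ν n).conv ν)]

lemma convPow_nonpos (ν : Measure ℝ) [SFinite ν] (hν : ν (Ioi 0) = 0) (n : ℕ) :
    convPow ν n (Ioi 0) = 0 := by
  induction n with
  | zero => simp [convPow]
  | succ n ih =>
      show (convPow ν n).conv ν (Ioi 0) = 0
      rw [conv_apply _ _ measurableSet_Ioi]
      have hae : ∀ᵐ a ∂(convPow ν n), a ∈ Iic (0 : ℝ) := by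
        rw [ae_iff]
        convert ih using 2; ext a; simp
      refine le_antisymm ?_ (by simp)
      have hmono : ∫⁻ a, ν ((fun b => a + b) ⁻¹' Ioi 0) ∂(convPow ν n)
          ≤ ∫⁻ _, 0 ∂(convPow ν n) := by
        refine lintegral_mono_ae (hae.mono fun a ha => ?_)
        have hsub : (fun b : ℝ => a + b) ⁻¹' Ioi 0 ⊆ Ioi 0 := by
          intro b hb
          simp only [mem_preimage, mem_Ioi] at *
          have : a ≤ 0 := ha
          linarith
        calc ν ((fun b : ℝ => a + b) ⁻¹' Ioi 0) ≤ ν (Ioi 0) := measure_mono hsub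
          _ = 0 := hν
      simpa using hmono

lemma ae_nonpos (ν : Measure ℝ) (hν : ν (Ioi 0) = 0) : ∀ᵐ a ∂ν, a ≤ 0 := by
  rw [ae_iff]
  convert hν using 2; ext a; simp

end Stmt16Aux

open Stmt16Aux in
theorem stmt16
    (μ μ₁ : Measure ℝ) [IsProbabilityMeasure μ] [IsProbabilityMeasure μ₁]
    (heq : ∀ n : ℕ, 1 ≤ n → ∀ s : Set ℝ, MeasurableSet s → s ⊆ Ici 0 →
      convPow μ n s = convPow μ₁ n s)
    (g : ℝ → ℝ) (hgmeas : Measurable g) (hgpos : ∀ x, 0 ≤ g x)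
    (hgsupp : ∀ x < (0 : ℝ), g x = 0) (hgone : ∫ x, g x = 1)
    (μbar μbar₁ : Measure ℝ)
    (hμbar : μbar = volume.withDensity
      (fun x => ∫⁻ y, ENNReal.ofReal (g (y - x)) ∂μ))
    (hμbar₁ : μbar₁ = volume.withDensity
      (fun x => ∫⁻ y, ENNReal.ofReal (g (y - x)) ∂μ₁)) :
    ∀ n : ℕ, 1 ≤ n → ∀ s : Set ℝ, MeasurableSet s → s ⊆ Ici 0 →
      convPow μbar n s = convPow μbar₁ n s := by
  -- the auxiliary measure with density `x ↦ g (-x)`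
  set ν : Measure ℝ := volume.withDensity (fun x => ENNReal.ofReal (g (-x))) with hν_def
  have hνmeas : Measurable fun x : ℝ => ENNReal.ofReal (g (-x)) := by fun_prop
  -- ν is a probability measure
  have hgint : Integrable g := by
    by_contra h
    rw [integral_undef h] at hgone
    norm_num at hgone
  have hν_univ : ν univ = 1 := by
    rw [hν_def, withDensity_apply _ MeasurableSet.univ, Measure.restrict_univ]
    have hmp : MeasurePreserving (fun x : ℝ => -x) volume volume :=
      ⟨measurable_neg, Measure.map_neg_eq_self volume⟩
    calc ∫⁻ x, ENNReal.ofReal (g (-x)) = ∫⁻ x, ENNReal.ofReal (g x) := by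
          rw [← hmp.lintegral_comp (by fun_prop)]
          simp [Function.comp]
      _ = ENNReal.ofReal (∫ x, g x) :=
          (ofReal_integral_eq_lintegral_ofReal hgint (ae_of_all _ hgpos)).symm
      _ = 1 := by rw [hgone]; simp
  haveI : IsProbabilityMeasure ν := ⟨hν_univ⟩
  -- ν is supported on (-∞, 0]
  have hν0 : ν (Ioi 0) = 0 := by
    rw [hν_def, withDensity_apply _ measurableSet_Ioi]
    have h0 : ∫⁻ x in Ioi (0 : ℝ), ENNReal.ofReal (g (-x))
        = ∫⁻ _ in Ioi (0 : ℝ), (0 : ENNReal) := by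
      refine setLIntegral_congr_fun measurableSet_Ioi (fun x hx => ?_)
      show ENNReal.ofReal (g (-x)) = 0
      rw [hgsupp (-x) (by simpa using hx)]
      simp
    rw [h0]
    simp
  -- μbar = μ.conv ν  and similarly for μ₁
  have key : ∀ (ρ : Measure ℝ), IsProbabilityMeasure ρ →
      volume.withDensity (fun x => ∫⁻ y, ENNReal.ofReal (g (y - x)) ∂ρ) = ρ.conv ν := by
    intro ρ hρ
    ext s hs
    rw [conv_apply _ _ hs]
    have hpt : ∀ a : ℝ, ν ((fun b => a + b) ⁻¹' s)
        = ∫⁻ x in s, ENNReal.ofReal (g (a - x)) := by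
      intro a
      have hpre : MeasurableSet ((fun b : ℝ => a + b) ⁻¹' s) :=
        hs.preimage (measurable_const_add a)
      rw [hν_def, withDensity_apply _ hpre]
      have hmap : Measure.map (fun b : ℝ => a + b) volume = volume :=
        MeasureTheory.map_add_left_eq_self volume a
      have hcalc : ∫⁻ x in s, ENNReal.ofReal (g (a - x))
          = ∫⁻ b in (fun b : ℝ => a + b) ⁻¹' s, ENNReal.ofReal (g (-b)) := by
        calc ∫⁻ x in s, ENNReal.ofReal (g (a - x))
            = ∫⁻ x in s, ENNReal.ofReal (g (a - x))
                ∂(Measure.map (fun b : ℝ => a + b) volume) := by rw [hmap]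
          _ = ∫⁻ b in (fun b : ℝ => a + b) ⁻¹' s,
                ENNReal.ofReal (g (a - (a + b))) :=
              setLIntegral_map hs (by fun_prop) (measurable_const_add a)
          _ = ∫⁻ b in (fun b : ℝ => a + b) ⁻¹' s, ENNReal.ofReal (g (-b)) := by
              refine lintegral_congr fun b => ?_
              rw [show a - (a + b) = -b by ring]
      exact hcalc.symm
    simp_rw [hpt]
    rw [lintegral_lintegral_swap (by fun_prop), withDensity_apply _ hs]
  have hbar : μbar = μ.conv ν := by rw [hμbar]; exact key μ inferInstance
  have hbar₁ : μbar₁ = μ₁.conv ν := by rw [hμbar₁]; exact key μ₁ inferInstance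
  -- main argument
  intro n hn s hs hss
  have hνn : convPow ν n (Ioi 0) = 0 := convPow_nonpos ν hν0 n
  have haen : ∀ᵐ b ∂(convPow ν n), b ≤ 0 := ae_nonpos _ hνn
  have expand : ∀ (ρ : Measure ℝ), IsProbabilityMeasure ρ →
      convPow (ρ.conv ν) n s
        = ∫⁻ b, convPow ρ n ((fun a => b + a) ⁻¹' s) ∂(convPow ν n) := by
    intro ρ hρ
    rw [convPow_conv, Measure.conv_comm, conv_apply _ _ hs]
  rw [hbar, hbar₁, expand μ inferInstance, expand μ₁ inferInstance]
  refine lintegral_congr_ae (haen.mono fun b hb => ?_)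
  refine heq n hn _ (hs.preimage (measurable_const_add b)) ?_
  intro a ha
  have h1 : 0 ≤ b + a := hss ha
  simp only [mem_Ici]
  linarith
end
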